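/- The RPP-to-iso encoding is well-typed: for every f ∈ RPP^k, the translated iso isos(f) has type Z^k ↔ Z^k. -/

import Mathlib

namespace RPPx

/-- Recursive Primitive Permutations, inductively generated by arity. -/
inductive RPP : ℕ → Type
  | id : RPP 1
  | suc : RPP 1
  | pre : RPP 1
  | sign : RPP 1
  | swap : RPP 2
  | comp {k : ℕ} (f g : RPP k) : RPP k
  | par {k l : ℕ} (f : RPP k) (g : RPP l) : RPP (k + l)
  | it {k : ℕ} (f : RPP k) : RPP (k + 1)
  | ite {k : ℕ} (f g h : RPP k) : RPP (k + 1)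

/-- The semantics of an RPP function, as a map `ℤ^k → ℤ^k`. -/
def eval : ∀ {k : ℕ}, RPP k → (Fin k → ℤ) → (Fin k → ℤ)
  | _, .id => fun v => v
  | _, .suc => fun v i => v i + 1
  | _, .pre => fun v i => v i - 1
  | _, .sign => fun v i => -(v i)
  | _, .swap => fun v i => v i.rev
  | _, .comp f g => fun v => eval g (eval f v)
  | _, @RPP.par k l f g =>
      fun v => Fin.append (eval f (v ∘ Fin.castAdd l)) (eval g (v ∘ Fin.natAdd k))
  | _, @RPP.it k f =>
      fun v => Fin.snoc ((eval f)^[(v (Fin.last k)).natAbs] (Fin.init v)) (v (Fin.last k))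
  | _, @RPP.ite k f g h =>
      fun v => Fin.snoc
        ((if 0 < v (Fin.last k) then eval f
          else if v (Fin.last k) = 0 then eval g else eval h) (Fin.init v))
        (v (Fin.last k))

/-- The structurally defined inverse of an RPP function. -/
def inv : ∀ {k : ℕ}, RPP k → RPP k
  | _, .id => .id
  | _, .suc => .pre
  | _, .pre => .suc
  | _, .sign => .sign
  | _, .swap => .swap
  | _, .comp f g => .comp (inv g) (inv f)
  | _, .par f g => .par (inv f) (inv g)
  | _, .it f => .it (inv f)
  | _, .ite f g h => .ite (inv f) (inv g) (inv h)

end RPPx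

namespace LinRev

/-! ## Types of the linear reversible language:  A ::= 1 | A⊕B | A⊗B | μX.A | X  -/

inductive Ty : Type
  | one : Ty
  | sum : Ty → Ty → Ty
  | prod : Ty → Ty → Ty
  | mu : Ty → Ty
  | tvar : ℕ → Ty
  deriving DecidableEq

/-- Substitute type `T` for the (de Bruijn) type variable `n` in a type. -/
def Ty.substF : Ty → ℕ → Ty → Ty
  | .one, _, _ => .one
  | .sum A B, n, T => .sum (A.substF n T) (B.substF n T)
  | .prod A B, n, T => .prod (A.substF n T) (B.substF n T)
  | .mu A, n, T => .mu (A.substF (n + 1) T)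
  | .tvar m, n, T => if m = n then T else .tvar m

/-- `A[X ← μX.A]`, the one-step unfolding of `μX.A` with body `A`. -/
def Ty.unfold (A : Ty) : Ty := A.substF 0 (.mu A)

/-! ## Values:  v ::= () | x | inl v | inr v | ⟨v,v⟩ | fold v  -/

inductive Val : Type
  | unit : Val
  | var : ℕ → Val
  | inl : Val → Val
  | inr : Val → Val
  | pair : Val → Val → Val
  | fold : Val → Val
  deriving DecidableEq

/-- Free variables of a value. -/
def Val.fv : Val → Finset ℕ
  | .unit => ∅
  | .var x => {x}
  | .inl v => v.fv
  | .inr v => v.fv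
  | .pair v w => v.fv ∪ w.fv
  | .fold v => v.fv

/-! ## Substitutions -/

/-- A substitution: a partial map from variables to values. -/
abbrev Sub := ℕ → Option Val

/-- The support of a substitution. -/
def Sub.supp (σ : Sub) : Set ℕ := {x | σ x ≠ none}

/-- Disjointness of supports. -/
def Sub.disj (σ₁ σ₂ : Sub) : Prop := ∀ x, σ₁ x = none ∨ σ₂ x = none

/-- Union of two substitutions. -/
def Sub.union (σ₁ σ₂ : Sub) : Sub := fun x => (σ₁ x).orElse (fun _ => σ₂ x)

/-- Applying a substitution to a value. -/
def Val.applySub (σ : Sub) : Val → Val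
  | .unit => .unit
  | .var x => (σ x).getD (.var x)
  | .inl v => .inl (v.applySub σ)
  | .inr v => .inr (v.applySub σ)
  | .pair v w => .pair (v.applySub σ) (w.applySub σ)
  | .fold v => .fold (v.applySub σ)

/-- The pattern-matching judgment `σ[p] = v`. -/
inductive Matches : Sub → Val → Val → Prop
  | unit : Matches (fun _ => none) .unit .unit
  | var (x : ℕ) (v : Val) :
      Matches (fun y => if y = x then some v else none) (.var x) v
  | inl {σ p v} : Matches σ p v → Matches σ (.inl p) (.inl v)
  | inr {σ p v} : Matches σ p v → Matches σ (.inr p) (.inr v)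
  | fold {σ p v} : Matches σ p v → Matches σ (.fold p) (.fold v)
  | pair {σ₁ σ₂ p₁ p₂ v₁ v₂} :
      Matches σ₁ p₁ v₁ → Matches σ₂ p₂ v₂ → Sub.disj σ₁ σ₂ →
      Matches (σ₁.union σ₂) (.pair p₁ p₂) (.pair v₁ v₂)

/-! ## The exhaustivity/non-overlapping predicate `OD_A(S)` -/

def proj1 (S : Set Val) : Set Val := {v | ∃ w, Val.pair v w ∈ S}
def proj2 (S : Set Val) : Set Val := {w | ∃ v, Val.pair v w ∈ S}
def sect1 (S : Set Val) (v : Val) : Set Val := {w | Val.pair v w ∈ S}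
def sect2 (S : Set Val) (w : Val) : Set Val := {v | Val.pair v w ∈ S}

inductive OD : Ty → Set Val → Prop
  | var (A : Ty) (x : ℕ) : OD A {Val.var x}
  | unit : OD .one {Val.unit}
  | sum {A B : Ty} {S T : Set Val} :
      OD A S → OD B T → OD (.sum A B) (Val.inl '' S ∪ Val.inr '' T)
  | mu {A : Ty} {S : Set Val} :
      OD A.unfold S → OD (.mu A) (Val.fold '' S)
  | prodL {A B : Ty} {S : Set Val} :
      (∀ u ∈ S, ∃ v w, u = Val.pair v w) →
      OD A (proj1 S) → (∀ v ∈ proj1 S, OD B (sect1 S v)) →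
      OD (.prod A B) S
  | prodR {A B : Ty} {S : Set Val} :
      (∀ u ∈ S, ∃ v w, u = Val.pair v w) →
      OD B (proj2 S) → (∀ w ∈ proj2 S, OD A (sect2 S w)) →
      OD (.prod A B) S

/-! ## Linear typing contexts (variables, at most one occurrence each) -/

abbrev Ctx := ℕ → Option Ty

def Ctx.empty : Ctx := fun _ => none
def Ctx.single (x : ℕ) (A : Ty) : Ctx := fun y => if y = x then some A else none
def Ctx.disj (Γ Δ : Ctx) : Prop := ∀ x, Γ x = none ∨ Δ x = none
def Ctx.union (Γ Δ : Ctx) : Ctx := fun x => (Γ x).orElse (fun _ => Δ x)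
def Ctx.unions (L : List Ctx) : Ctx := L.foldr Ctx.union Ctx.empty

/-- Linear typing of values: `Δ ⊢ v : A`. -/
inductive VTy : Ctx → Val → Ty → Prop
  | unit : VTy Ctx.empty .unit .one
  | var (x : ℕ) (A : Ty) : VTy (Ctx.single x A) (.var x) A
  | inl {Γ v A B} : VTy Γ v A → VTy Γ (.inl v) (.sum A B)
  | inr {Γ v A B} : VTy Γ v B → VTy Γ (.inr v) (.sum A B)
  | fold {Γ v A} : VTy Γ v A.unfold → VTy Γ (.fold v) (.mu A)
  | pair {Γ Δ v w A B} :
      VTy Γ v A → VTy Δ w B → Ctx.disj Γ Δ →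
      VTy (Γ.union Δ) (.pair v w) (.prod A B)

end LinRev
namespace LinRev

/-! ## Patterns, terms, isos -/

inductive Pat : Type
  | pvar : ℕ → Pat
  | ppair : Pat → Pat → Pat
  deriving DecidableEq

def Pat.toVal : Pat → Val
  | .pvar x => .var x
  | .ppair p q => .pair p.toVal q.toVal

def Pat.vars : Pat → Finset ℕ
  | .pvar x => {x}
  | .ppair p q => p.vars ∪ q.vars

mutual
  inductive Term : Type
    | unit : Term
    | var : ℕ → Term
    | inl : Term → Term
    | inr : Term → Term
    | pair : Term → Term → Term
    | fold : Term → Term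
    | app : Iso → Term → Term
    | lett : Pat → Term → Term → Term

  inductive Iso : Type
    | clauses : Clauses → Iso
    | fixI : ℕ → Iso → Iso
    | ivar : ℕ → Iso

  inductive Clauses : Type
    | nil : Clauses
    | cons : Val → Term → Clauses → Clauses
end

def Clauses.toList : Clauses → List (Val × Term)
  | .nil => []
  | .cons v e r => (v, e) :: r.toList

def Val.toTerm : Val → Term
  | .unit => .unit
  | .var x => .var x
  | .inl v => .inl v.toTerm
  | .inr v => .inr v.toTerm
  | .pair v w => .pair v.toTerm w.toTerm
  | .fold v => .fold v.toTerm

def Pat.toTerm (p : Pat) : Term := p.toVal.toTerm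

def Term.asVal : Term → Option Val
  | .unit => some .unit
  | .var x => some (.var x)
  | .inl t => t.asVal.map .inl
  | .inr t => t.asVal.map .inr
  | .pair a b =>
      match a.asVal, b.asVal with
      | some v, some w => some (.pair v w)
      | _, _ => none
  | .fold t => t.asVal.map .fold
  | _ => none

def Term.asPat : Term → Option Pat
  | .var x => some (.pvar x)
  | .pair a b =>
      match a.asPat, b.asPat with
      | some p, some q => some (.ppair p q)
      | _, _ => none
  | _ => none

/-- `Val(e)`: the value at the end of a chain of lets. -/
def Term.valOf : Term → Option Val
  | .lett _ _ t₂ => t₂.valOf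
  | t => t.asVal

/-- Free (term) variables of a term. -/
def Term.fvT : Term → Finset ℕ
  | .unit => ∅
  | .var x => {x}
  | .inl t => t.fvT
  | .inr t => t.fvT
  | .fold t => t.fvT
  | .pair a b => a.fvT ∪ b.fvT
  | .app _ t => t.fvT
  | .lett p a b => a.fvT ∪ (b.fvT \ p.vars)

/-- Applying a (value) substitution to a term. -/
def Term.applySub (σ : Sub) : Term → Term
  | .unit => .unit
  | .var x => ((σ x).map Val.toTerm).getD (.var x)
  | .inl t => .inl (t.applySub σ)
  | .inr t => .inr (t.applySub σ)
  | .pair a b => .pair (a.applySub σ) (b.applySub σ)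
  | .fold t => .fold (t.applySub σ)
  | .app ω t => .app ω (t.applySub σ)
  | .lett p a b => .lett p (a.applySub σ) (b.applySub σ)

/-! ## Substitution of iso-variables -/

mutual
  def Term.isoSub (f : ℕ) (w : Iso) : Term → Term
    | .unit => .unit
    | .var x => .var x
    | .inl t => .inl (Term.isoSub f w t)
    | .inr t => .inr (Term.isoSub f w t)
    | .pair a b => .pair (Term.isoSub f w a) (Term.isoSub f w b)
    | .fold t => .fold (Term.isoSub f w t)
    | .app ω t => .app (Iso.isoSub f w ω) (Term.isoSub f w t)
    | .lett p a b => .lett p (Term.isoSub f w a) (Term.isoSub f w b)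
  termination_by t => sizeOf t

  def Iso.isoSub (f : ℕ) (w : Iso) : Iso → Iso
    | .ivar g => if g = f then w else .ivar g
    | .fixI g ω => if g = f then .fixI g ω else .fixI g (Iso.isoSub f w ω)
    | .clauses l => .clauses (Clauses.isoSub f w l)
  termination_by ω => sizeOf ω

  def Clauses.isoSub (f : ℕ) (w : Iso) : Clauses → Clauses
    | .nil => .nil
    | .cons v e r => .cons v (Term.isoSub f w e) (Clauses.isoSub f w r)
  termination_by l => sizeOf l
end

/-! ## Inversion of isos -/

mutual
  /-- The dual iso `ω⊥`. -/
  def Iso.inv : Iso → Iso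
    | .ivar f => .ivar f
    | .fixI f ω => .fixI f ω.inv
    | .clauses l => .clauses l.inv
  termination_by ω => sizeOf ω

  def Clauses.inv : Clauses → Clauses
    | .nil => .nil
    | .cons v e r =>
        match invAux (Val.toTerm v) e with
        | some (v', e') => .cons v' e' r.inv
        | none => .cons v e r.inv
  termination_by l => sizeOf l

  /-- Invert a clause body `let p₁ = ω₁ p₁' in … let pₙ = ωₙ pₙ' in v'`,
  reversing the lets and inverting each sub-iso; `acc` accumulates the result. -/
  def invAux : Term → Term → Option (Val × Term)
    | acc, .lett p (.app ω t) e =>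
        match t.asPat with
        | some p' => invAux (.lett p' (.app ω.inv p.toTerm) acc) e
        | none => none
    | acc, t => t.asVal.map (fun v' => (v', acc))
  termination_by _ e => sizeOf e
end

end LinRev
namespace LinRev

/-! ## Operational semantics (deterministic call-by-value) -/

inductive Step : Term → Term → Prop
  | inlC {t t'} : Step t t' → Step (.inl t) (.inl t')
  | inrC {t t'} : Step t t' → Step (.inr t) (.inr t')
  | foldC {t t'} : Step t t' → Step (.fold t) (.fold t')
  | pairL {t t'} (v : Val) : Step t t' → Step (.pair t v.toTerm) (.pair t' v.toTerm)
  | pairR {t t'} (v : Val) : Step t t' → Step (.pair v.toTerm t) (.pair v.toTerm t')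
  | appC {ω t t'} : Step t t' → Step (.app ω t) (.app ω t')
  | lettC {p t₁ t₁' t₂} : Step t₁ t₁' → Step (.lett p t₁ t₂) (.lett p t₁' t₂)
  | isoRec {f ω t} :
      Step (.app (.fixI f ω) t) (.app (Iso.isoSub f (.fixI f ω) ω) t)
  | lettE {σ : Sub} {p : Pat} {v : Val} {t : Term} :
      Matches σ p.toVal v → Step (.lett p v.toTerm t) (t.applySub σ)
  | isoApp {σ : Sub} {l : Clauses} {vi : Val} {e : Term} {v : Val} :
      (vi, e) ∈ l.toList → Matches σ vi v →
      Step (.app (.clauses l) v.toTerm) (e.applySub σ)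

/-- Reflexive-transitive closure `→*`. -/
def Steps : Term → Term → Prop := Relation.ReflTransGen Step

/-! ## Structural recursion criterion -/

/-- Flatten a right-nested tensor type into its components. -/
def Ty.tuple : Ty → List Ty
  | .prod A B => A :: B.tuple
  | A => [A]

/-- Flatten a right-nested pair value into its components. -/
def Val.tuple : Val → List Val
  | .pair a b => a :: b.tuple
  | v => [v]

/-- If a term is a tuple of variables `(x₁, …, xₘ)`, return the variables. -/
def Term.tupleVars : Term → Option (List ℕ)
  | .var x => some [x]
  | .pair (.var x) t => t.tupleVars.map (x :: ·)
  | _ => none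

/-- Subterm relation on values. -/
inductive Val.SubV : Val → Val → Prop
  | refl (v : Val) : Val.SubV v v
  | inl {u v} : Val.SubV u v → Val.SubV u (.inl v)
  | inr {u v} : Val.SubV u v → Val.SubV u (.inr v)
  | fold {u v} : Val.SubV u v → Val.SubV u (.fold v)
  | pairL {u v w} : Val.SubV u v → Val.SubV u (.pair v w)
  | pairR {u v w} : Val.SubV u w → Val.SubV u (.pair v w)

/- `RecCallT f p t` : the recursive call `f p` occurs as a subterm of `t`. -/
mutual
  inductive RecCallT : ℕ → Term → Term → Prop
    | here (f : ℕ) (p : Term) : RecCallT f p (.app (.ivar f) p)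
    | inl {f p t} : RecCallT f p t → RecCallT f p (.inl t)
    | inr {f p t} : RecCallT f p t → RecCallT f p (.inr t)
    | fold {f p t} : RecCallT f p t → RecCallT f p (.fold t)
    | pairL {f p t₁ t₂} : RecCallT f p t₁ → RecCallT f p (.pair t₁ t₂)
    | pairR {f p t₁ t₂} : RecCallT f p t₂ → RecCallT f p (.pair t₁ t₂)
    | appIso {f p ω t} : RecCallI f p ω → RecCallT f p (.app ω t)
    | appArg {f p ω t} : RecCallT f p t → RecCallT f p (.app ω t)
    | lett₁ {f p q t₁ t₂} : RecCallT f p t₁ → RecCallT f p (.lett q t₁ t₂)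
    | lett₂ {f p q t₁ t₂} : RecCallT f p t₂ → RecCallT f p (.lett q t₁ t₂)

  inductive RecCallI : ℕ → Term → Iso → Prop
    | clauses {f p l} : RecCallC f p l → RecCallI f p (.clauses l)
    | fixI {f g p ω} : RecCallI f p ω → g ≠ f → RecCallI f p (.fixI g ω)

  inductive RecCallC : ℕ → Term → Clauses → Prop
    | head {f p v e r} : RecCallT f p e → RecCallC f p (.cons v e r)
    | tail {f p v e r} : RecCallC f p r → RecCallC f p (.cons v e r)
end

/-- The structural recursion criterion for `fix f. {vᵢ ↔ eᵢ} : A ↔ C`: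
some component `Aⱼ = μX.B` of the input type is such that in every clause,
if the `j`-th component of the pattern is closed there is no recursive call,
and otherwise every recursive call `f p` has `p` a tuple of variables whose
`j`-th component is a strict subterm of the `j`-th pattern component. -/
def StructRecClauses (f : ℕ) (l : Clauses) (A : Ty) : Prop :=
  ∃ (j : ℕ) (B : Ty), A.tuple[j]? = some (Ty.mu B) ∧
    ∀ c ∈ l.toList, ∃ vj, (Val.tuple c.1)[j]? = some vj ∧
      ((vj.fv = ∅ ∧ ∀ p, ¬ RecCallT f p c.2) ∨
       (∀ p, RecCallT f p c.2 → ∃ xs : List ℕ,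
          p.tupleVars = some xs ∧ xs.length = A.tuple.length ∧
          ∃ x, xs[j]? = some x ∧ Val.SubV (.var x) vj ∧ Val.var x ≠ vj))

/-! ## Typing of terms and isos -/

/-- An iso-variable context: at most one iso-variable `f : A ↔ B`. -/
abbrev IsoCtx := Option (ℕ × Ty × Ty)

/-- Typing of let-patterns, producing the context of bound variables. -/
inductive PatTy : Pat → Ty → Ctx → Prop
  | pvar (x : ℕ) (A : Ty) : PatTy (.pvar x) A (Ctx.single x A)
  | ppair {p q A B Γ Δ} :
      PatTy p A Γ → PatTy q B Δ → Ctx.disj Γ Δ →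
      PatTy (.ppair p q) (.prod A B) (Γ.union Δ)

mutual
  /-- Typing of terms: `Δ; Ψ ⊢ t : A`. -/
  inductive TermTy : Ctx → IsoCtx → Term → Ty → Prop
    | unit (Ψ : IsoCtx) : TermTy Ctx.empty Ψ .unit .one
    | var (x : ℕ) (A : Ty) (Ψ : IsoCtx) : TermTy (Ctx.single x A) Ψ (.var x) A
    | inl {Γ Ψ t A B} : TermTy Γ Ψ t A → TermTy Γ Ψ (.inl t) (.sum A B)
    | inr {Γ Ψ t A B} : TermTy Γ Ψ t B → TermTy Γ Ψ (.inr t) (.sum A B)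
    | fold {Γ Ψ t A} : TermTy Γ Ψ t A.unfold → TermTy Γ Ψ (.fold t) (.mu A)
    | pair {Γ Δ Ψ t₁ t₂ A B} :
        TermTy Γ Ψ t₁ A → TermTy Δ Ψ t₂ B → Ctx.disj Γ Δ →
        TermTy (Γ.union Δ) Ψ (.pair t₁ t₂) (.prod A B)
    | appV {Γ Ψ ω t A B} :
        IsoTy Ψ ω A B → TermTy Γ Ψ t A → TermTy Γ Ψ (.app ω t) B
    | appC {Γ Ψ ω t A B} :
        IsoTy none ω A B → TermTy Γ Ψ t A → TermTy Γ Ψ (.app ω t) B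
    | lett {Γ Δ Ξ Ψ p t₁ t₂ A B} :
        TermTy Γ Ψ t₁ A → PatTy p A Ξ → TermTy (Δ.union Ξ) Ψ t₂ B →
        Ctx.disj Γ Δ → Ctx.disj Δ Ξ →
        TermTy (Γ.union Δ) Ψ (.lett p t₁ t₂) B

  /-- Typing of isos: `Ψ ⊢ ω : A ↔ B`. -/
  inductive IsoTy : IsoCtx → Iso → Ty → Ty → Prop
    | ivar (f : ℕ) (A B : Ty) : IsoTy (some (f, A, B)) (.ivar f) A B
    | fixI {f ω A B} (Ψ : IsoCtx) :
        IsoTy (some (f, A, B)) ω A B →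
        (∀ l, ω = .clauses l → StructRecClauses f l A) →
        IsoTy Ψ (.fixI f ω) A B
    | clauses {Ψ l A B} (Γof : Val × Term → Ctx) :
        (∀ c ∈ Clauses.toList l, VTy (Γof c) c.1 A) →
        (∀ c ∈ Clauses.toList l, TermTy (Γof c) Ψ c.2 B) →
        OD A {v | ∃ e, (v, e) ∈ Clauses.toList l} →
        OD B {w | ∃ c ∈ Clauses.toList l, Term.valOf c.2 = some w} →
        IsoTy Ψ (.clauses l) A B
end

/-! ## Explicit substitutions -/

/-- The substitution determined by an association list. -/
def Sub.ofList (L : List (ℕ × Val)) : Sub :=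
  fun x => (L.find? (fun p => p.1 = x)).map Prod.snd

/-- `let σ in t` : a nested sequence of lets, one per binding. -/
def letSig (L : List (ℕ × Val)) (t : Term) : Term :=
  L.foldr (fun xv acc => .lett (.pvar xv.1) xv.2.toTerm acc) t

/-- The explicit let-propagation rules `→ₑₗₑₜ`. -/
inductive ELet : Term → Term → Prop
  | letvar {x : ℕ} {v : Val} : ELet (.lett (.pvar x) v.toTerm (.var x)) v.toTerm
  | letpair {x : ℕ} {p : Pat} {t₁ t₂ t : Term} :
      ELet (.lett (.ppair (.pvar x) p) (.pair t₁ t₂) t)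
           (.lett (.pvar x) t₁ (.lett p t₂ t))
  | pairL {x : ℕ} {v : Val} {t₁ t₂ : Term} : x ∈ t₁.fvT →
      ELet (.lett (.pvar x) v.toTerm (.pair t₁ t₂))
           (.pair (.lett (.pvar x) v.toTerm t₁) t₂)
  | pairR {x : ℕ} {v : Val} {t₁ t₂ : Term} : x ∈ t₂.fvT →
      ELet (.lett (.pvar x) v.toTerm (.pair t₁ t₂))
           (.pair t₁ (.lett (.pvar x) v.toTerm t₂))
  | inl {x : ℕ} {v : Val} {t : Term} :
      ELet (.lett (.pvar x) v.toTerm (.inl t)) (.inl (.lett (.pvar x) v.toTerm t))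
  | inr {x : ℕ} {v : Val} {t : Term} :
      ELet (.lett (.pvar x) v.toTerm (.inr t)) (.inr (.lett (.pvar x) v.toTerm t))
  | fold {x : ℕ} {v : Val} {t : Term} :
      ELet (.lett (.pvar x) v.toTerm (.fold t)) (.fold (.lett (.pvar x) v.toTerm t))
  | app {x : ℕ} {v : Val} {ω : Iso} {t : Term} :
      ELet (.lett (.pvar x) v.toTerm (.app ω t)) (.app ω (.lett (.pvar x) v.toTerm t))

/-- The explicit-substitution reduction `→_{eβ}`. -/
inductive EBeta : Term → Term → Prop
  | elet {t t'} : ELet t t' → EBeta t t'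
  | inlC {t t'} : EBeta t t' → EBeta (.inl t) (.inl t')
  | inrC {t t'} : EBeta t t' → EBeta (.inr t) (.inr t')
  | foldC {t t'} : EBeta t t' → EBeta (.fold t) (.fold t')
  | pairL {t t'} (v : Val) : EBeta t t' → EBeta (.pair t v.toTerm) (.pair t' v.toTerm)
  | pairR {t t'} (v : Val) : EBeta t t' → EBeta (.pair v.toTerm t) (.pair v.toTerm t')
  | appC {ω t t'} : EBeta t t' → EBeta (.app ω t) (.app ω t')
  | lettC {p t₁ t₁' t₂} : EBeta t₁ t₁' → EBeta (.lett p t₁ t₂) (.lett p t₁' t₂)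
  | isoRec {f ω t} :
      EBeta (.app (.fixI f ω) t) (.app (Iso.isoSub f (.fixI f ω) ω) t)
  | lettE {L : List (ℕ × Val)} {p : Pat} {v : Val} {t : Term} :
      Matches (Sub.ofList L) p.toVal v → EBeta (.lett p v.toTerm t) (letSig L t)
  | isoApp {L : List (ℕ × Val)} {l : Clauses} {vi : Val} {e : Term} {v : Val} :
      (vi, e) ∈ l.toList → Matches (Sub.ofList L) vi v →
      EBeta (.app (.clauses l) v.toTerm) (letSig L e)

end LinRev
namespace LinRev

/-! ## Encoding of integers -/

/-- `npos = μX. 1 ⊕ X`, the type of strictly positive naturals. -/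
def nposTy : Ty := .mu (.sum .one (.tvar 0))

/-- `Z = 1 ⊕ (npos ⊕ npos)`, the type of integers. -/
def ZTy : Ty := .sum .one (.sum nposTy nposTy)

/-- `enpos n` encodes the strictly positive natural `n+1 : npos`. -/
def enpos : ℕ → Val
  | 0 => .fold (.inl .unit)
  | n + 1 => .fold (.inr (enpos n))

/-- `encZ z` encodes the integer `z : Z`. -/
def encZ (z : ℤ) : Val :=
  if 0 < z then .inr (.inl (enpos (z.natAbs - 1)))
  else if z = 0 then .inl .unit
  else .inr (.inr (enpos (z.natAbs - 1)))

/-- The successor iso on encoded integers. -/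
def succIso : Iso := .clauses
  (.cons (.inl .unit) ((Val.inr (.inl (.fold (.inl .unit)))).toTerm)
  (.cons (.inr (.inl (.var 0))) ((Val.inr (.inl (.fold (.inr (.var 0))))).toTerm)
  (.cons (.inr (.inr (.fold (.inl .unit)))) ((Val.inl .unit).toTerm)
  (.cons (.inr (.inr (.fold (.inr (.var 0))))) ((Val.inr (.inr (.var 0))).toTerm)
   .nil))))

end LinRev
namespace LinRev

/-! ## Translation of RPP into isos -/

/-- Right-nested tuple of values. -/
def tupleV : List Val → Val
  | [] => .unit
  | [v] => v
  | v :: vs => .pair v (tupleV vs)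

/-- Right-nested tuple of types. -/
def tupleTy : List Ty → Ty
  | [] => .one
  | [A] => A
  | A :: As => .prod A (tupleTy As)

/-- Right-nested tuple pattern of variables. -/
def patOfVars : List ℕ → Pat
  | [] => .pvar 0
  | [x] => .pvar x
  | x :: xs => .ppair (.pvar x) (patOfVars xs)

/-- `Z^k`. -/
def Zpow (k : ℕ) : Ty := tupleTy (List.replicate k ZTy)

/-- Tuple of variables `s, …, s+c-1`. -/
def vt (s c : ℕ) : Val := tupleV ((List.range' s c).map .var)

def pt' (s c : ℕ) : Pat := patOfVars (List.range' s c)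

def idIso : Iso := .clauses (.cons (.var 0) (Term.var 0) .nil)

def swapIso : Iso :=
  .clauses (.cons (.pair (.var 0) (.var 1)) ((Val.pair (.var 1) (.var 0)).toTerm) .nil)

def signIso : Iso := .clauses
  (.cons (.inr (.inl (.var 0))) ((Val.inr (.inr (.var 0))).toTerm)
  (.cons (.inr (.inr (.var 0))) ((Val.inr (.inl (.var 0))).toTerm)
  (.cons (.inl .unit) ((Val.inl .unit).toTerm) .nil)))

/-- Encoding of sequential composition `f ; g` at arity `n`. -/
def compIso (n : ℕ) (wf wg : Iso) : Iso :=
  .clauses (.cons (vt 0 n)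
    (.lett (pt' n n) (.app wf (vt 0 n).toTerm)
      (.lett (pt' (2 * n) n) (.app wg (vt n n).toTerm)
        (vt (2 * n) n).toTerm)) .nil)

/-- Encoding of parallel composition `f ∥ g` at arities `j` and `l`. -/
def parIso (j l : ℕ) (wf wg : Iso) : Iso :=
  .clauses (.cons (vt 0 (j + l))
    (.lett (patOfVars (List.range' (j + l) j)) (.app wf (vt 0 j).toTerm)
      (.lett (patOfVars (List.range' (2 * j + l) l)) (.app wg (vt j l).toTerm)
        (tupleV (((List.range' (j + l) j ++ List.range' (2 * j + l) l)).map .var)).toTerm))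
    .nil)

/-- The auxiliary, structurally recursive iterating iso
`ω_aux : Z^k ⊗ npos ↔ Z^k ⊗ npos`. -/
def auxIt (k : ℕ) (wf : Iso) : Iso :=
  .fixI 0 (.clauses
    (.cons (tupleV (((List.range' 0 k).map Val.var) ++ [.fold (.inl .unit)]))
      (.lett (pt' k k) (.app wf (vt 0 k).toTerm)
        (tupleV (((List.range' k k).map Val.var) ++ [Val.fold (.inl .unit)])).toTerm)
    (.cons (tupleV (((List.range' 0 k).map Val.var) ++ [.fold (.inr (.var k))]))
      (.lett (pt' (k + 1) k) (.app wf (vt 0 k).toTerm)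
        (.lett (patOfVars (List.range' (2 * k + 1) k ++ [3 * k + 1]))
          (.app (.ivar 0)
            (tupleV (((List.range' (k + 1) k).map Val.var) ++ [Val.var k])).toTerm)
          (tupleV (((List.range' (2 * k + 1) k).map Val.var)
              ++ [Val.fold (.inr (.var (3 * k + 1)))])).toTerm))
      .nil)))

/-- Encoding of the finite iteration `It[f]`. -/
def itIso (k : ℕ) (wf : Iso) : Iso :=
  .clauses
    (.cons (tupleV (((List.range' 0 k).map Val.var) ++ [.inl .unit]))
      (tupleV (((List.range' 0 k).map Val.var) ++ [Val.inl .unit])).toTerm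
    (.cons (tupleV (((List.range' 0 k).map Val.var) ++ [.inr (.inl (.var k))]))
      (.lett (patOfVars (List.range' (k + 1) k ++ [2 * k + 1]))
        (.app (auxIt k wf) (tupleV (((List.range' 0 k).map Val.var) ++ [Val.var k])).toTerm)
        (tupleV (((List.range' (k + 1) k).map Val.var)
            ++ [Val.inr (.inl (.var (2 * k + 1)))])).toTerm)
    (.cons (tupleV (((List.range' 0 k).map Val.var) ++ [.inr (.inr (.var k))]))
      (.lett (patOfVars (List.range' (k + 1) k ++ [2 * k + 1]))
        (.app (auxIt k wf) (tupleV (((List.range' 0 k).map Val.var) ++ [Val.var k])).toTerm)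
        (tupleV (((List.range' (k + 1) k).map Val.var)
            ++ [Val.inr (.inr (.var (2 * k + 1)))])).toTerm)
      .nil)))

/-- Encoding of the selection `If[f,g,h]`. -/
def ifIso (k : ℕ) (wf wg wh : Iso) : Iso :=
  .clauses
    (.cons (tupleV (((List.range' 0 k).map Val.var) ++ [.inr (.inl (.var k))]))
      (.lett (pt' (k + 1) k) (.app wf (vt 0 k).toTerm)
        (tupleV (((List.range' (k + 1) k).map Val.var)
            ++ [Val.inr (.inl (.var k))])).toTerm)
    (.cons (tupleV (((List.range' 0 k).map Val.var) ++ [.inl .unit]))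
      (.lett (pt' (k + 1) k) (.app wg (vt 0 k).toTerm)
        (tupleV (((List.range' (k + 1) k).map Val.var) ++ [Val.inl .unit])).toTerm)
    (.cons (tupleV (((List.range' 0 k).map Val.var) ++ [.inr (.inr (.var k))]))
      (.lett (pt' (k + 1) k) (.app wh (vt 0 k).toTerm)
        (tupleV (((List.range' (k + 1) k).map Val.var)
            ++ [Val.inr (.inr (.var k))])).toTerm)
      .nil)))

/-- The translation `isos(·)` from RPP to isos of the reversible language. -/
def isosOf : ∀ {k : ℕ}, RPPx.RPP k → Iso
  | _, .id => idIso
  | _, .suc => succIso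
  | _, .pre => succIso.inv
  | _, .sign => signIso
  | _, .swap => swapIso
  | k, .comp f g => compIso k (isosOf f) (isosOf g)
  | _, @RPPx.RPP.par j l f g => parIso j l (isosOf f) (isosOf g)
  | _, @RPPx.RPP.it k f => itIso k (isosOf f)
  | _, @RPPx.RPP.ite k f g h => ifIso k (isosOf f) (isosOf g) (isosOf h)

/-- Encoding of a tuple of integers. -/
def encTup {k : ℕ} (v : Fin k → ℤ) : Val :=
  tupleV (List.ofFn fun i => encZ (v i))

end LinRev

namespace LinRev

/-! ### Basic context lemmas -/

theorem Ctx.union_apply_none {Γ : Ctx} (Δ : Ctx) {x : ℕ} (h : Γ x = none) :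
    (Γ.union Δ) x = Δ x := by unfold Ctx.union; rw [h]; rfl

theorem Ctx.union_apply_some {Γ : Ctx} (Δ : Ctx) {x : ℕ} {A : Ty} (h : Γ x = some A) :
    (Γ.union Δ) x = some A := by unfold Ctx.union; rw [h]; rfl

theorem Ctx.union_empty (Γ : Ctx) : Γ.union Ctx.empty = Γ := by
  funext x; cases h : Γ x
  · rw [Ctx.union_apply_none _ h]; rfl
  · rw [Ctx.union_apply_some _ h]

theorem Ctx.empty_union (Γ : Ctx) : Ctx.empty.union Γ = Γ := by
  funext x; rfl

theorem Ctx.union_assoc (Γ Δ Ξ : Ctx) :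
    (Γ.union Δ).union Ξ = Γ.union (Δ.union Ξ) := by
  funext x; cases h : Γ x
  · cases h2 : Δ x
    · rw [Ctx.union_apply_none Ξ (by rw [Ctx.union_apply_none Δ h]; exact h2),
        Ctx.union_apply_none _ h, Ctx.union_apply_none _ h2]
    · rw [Ctx.union_apply_some Ξ (by rw [Ctx.union_apply_none Δ h]; exact h2),
        Ctx.union_apply_none _ h, Ctx.union_apply_some _ h2]
  · rw [Ctx.union_apply_some Ξ (Ctx.union_apply_some Δ h), Ctx.union_apply_some _ h]

theorem Ctx.disj_empty (Γ : Ctx) : Ctx.disj Γ Ctx.empty := fun _ => Or.inr rfl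
theorem Ctx.empty_disj (Γ : Ctx) : Ctx.disj Ctx.empty Γ := fun _ => Or.inl rfl

theorem Ctx.disj.symm {Γ Δ : Ctx} (h : Ctx.disj Γ Δ) : Ctx.disj Δ Γ :=
  fun x => (h x).symm

theorem Ctx.union_comm_of_disj {Γ Δ : Ctx} (h : Ctx.disj Γ Δ) :
    Γ.union Δ = Δ.union Γ := by
  funext x
  rcases h x with h' | h'
  · rw [Ctx.union_apply_none _ h']
    cases h'' : Δ x
    · rw [Ctx.union_apply_none _ h'', h']
    · rw [Ctx.union_apply_some _ h'']
  · rw [Ctx.union_apply_none _ h']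
    cases h'' : Γ x
    · rw [Ctx.union_apply_none _ h'', h']
    · rw [Ctx.union_apply_some _ h'']

theorem Ctx.union_eq_none {Γ Δ : Ctx} {x : ℕ} (h : (Γ.union Δ) x = none) :
    Γ x = none ∧ Δ x = none := by
  cases h' : Γ x
  · rw [Ctx.union_apply_none _ h'] at h; exact ⟨rfl, h⟩
  · rw [Ctx.union_apply_some _ h'] at h; cases h

theorem Ctx.union_eq_none' {Γ Δ : Ctx} {x : ℕ} (h1 : Γ x = none) (h2 : Δ x = none) :
    (Γ.union Δ) x = none := by rw [Ctx.union_apply_none _ h1]; exact h2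

theorem Ctx.disj_union_iff {Γ Δ Ξ : Ctx} :
    Ctx.disj Γ (Δ.union Ξ) ↔ Ctx.disj Γ Δ ∧ Ctx.disj Γ Ξ := by
  constructor
  · intro h
    constructor <;> intro x <;> rcases h x with h' | h'
    · exact Or.inl h'
    · exact Or.inr (Ctx.union_eq_none h').1
    · exact Or.inl h'
    · exact Or.inr (Ctx.union_eq_none h').2
  · rintro ⟨h1, h2⟩ x
    rcases h1 x with h' | h'
    · exact Or.inl h'
    · rcases h2 x with h'' | h''
      · exact Or.inl h''
      · exact Or.inr (Ctx.union_eq_none' h' h'')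

theorem Ctx.union_disj_iff {Γ Δ Ξ : Ctx} :
    Ctx.disj (Γ.union Δ) Ξ ↔ Ctx.disj Γ Ξ ∧ Ctx.disj Δ Ξ := by
  rw [show Ctx.disj (Γ.union Δ) Ξ ↔ Ctx.disj Ξ (Γ.union Δ) from ⟨Ctx.disj.symm, Ctx.disj.symm⟩,
    Ctx.disj_union_iff]
  exact and_congr ⟨Ctx.disj.symm, Ctx.disj.symm⟩ ⟨Ctx.disj.symm, Ctx.disj.symm⟩

/-- The context determined by an association list. -/
def ctxOf (L : List (ℕ × Ty)) : Ctx := Ctx.unions (L.map fun p => Ctx.single p.1 p.2)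

@[simp] theorem ctxOf_nil : ctxOf [] = Ctx.empty := rfl

@[simp] theorem ctxOf_cons (p : ℕ × Ty) (L : List (ℕ × Ty)) :
    ctxOf (p :: L) = (Ctx.single p.1 p.2).union (ctxOf L) := rfl

theorem ctxOf_append (L₁ L₂ : List (ℕ × Ty)) :
    ctxOf (L₁ ++ L₂) = (ctxOf L₁).union (ctxOf L₂) := by
  induction L₁ with
  | nil => simp [Ctx.empty_union]
  | cons p L ih => simp [ih, Ctx.union_assoc]

@[simp] theorem ctxOf_single (x : ℕ) (A : Ty) : ctxOf [(x, A)] = Ctx.single x A := by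
  simp [Ctx.union_empty]

theorem ctxOf_eq_none (L : List (ℕ × Ty)) (x : ℕ) (h : x ∉ L.map Prod.fst) :
    ctxOf L x = none := by
  induction L with
  | nil => rfl
  | cons p L ih =>
    simp only [List.map_cons, List.mem_cons, not_or] at h
    rw [ctxOf_cons]
    exact Ctx.union_eq_none' (by simp [Ctx.single, h.1]) (ih h.2)

theorem single_disj (x : ℕ) (A : Ty) (L : List (ℕ × Ty)) (h : x ∉ L.map Prod.fst) :
    Ctx.disj (Ctx.single x A) (ctxOf L) := by
  intro y
  by_cases hy : y = x
  · subst hy; exact Or.inr (ctxOf_eq_none _ _ h)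
  · exact Or.inl (by simp [Ctx.single, hy])

theorem ctxOf_disj (L₁ L₂ : List (ℕ × Ty))
    (h : ∀ x ∈ L₁.map Prod.fst, x ∉ L₂.map Prod.fst) :
    Ctx.disj (ctxOf L₁) (ctxOf L₂) := by
  intro x
  by_cases hx : x ∈ L₁.map Prod.fst
  · exact Or.inr (ctxOf_eq_none _ _ (h x hx))
  · exact Or.inl (ctxOf_eq_none _ _ hx)

/-- cast lemmas -/
theorem VTy.cast {Γ Γ' : Ctx} {v A} (h : Γ = Γ') (hv : VTy Γ v A) : VTy Γ' v A := h ▸ hv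
theorem TermTy.cast {Γ Γ' : Ctx} {Ψ t A} (h : Γ = Γ') (ht : TermTy Γ Ψ t A) :
    TermTy Γ' Ψ t A := h ▸ ht
theorem PatTy.cast {Γ Γ' : Ctx} {p A} (h : Γ = Γ') (hp : PatTy p A Γ) : PatTy p A Γ' := h ▸ hp
theorem OD.cast {A} {S S' : Set Val} (h : S = S') (hs : OD A S) : OD A S' := h ▸ hs

end LinRev

namespace LinRev

/-! ### Tuple lemmas -/

@[simp] theorem tupleV_nil : tupleV [] = .unit := rfl
@[simp] theorem tupleV_one (v : Val) : tupleV [v] = v := rfl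
theorem tupleV_cons (v : Val) {l : List Val} (h : l ≠ []) :
    tupleV (v :: l) = .pair v (tupleV l) := by
  cases l with
  | nil => exact absurd rfl h
  | cons a l => rfl

@[simp] theorem tupleTy_nil : tupleTy [] = .one := rfl
@[simp] theorem tupleTy_one (A : Ty) : tupleTy [A] = A := rfl
theorem tupleTy_cons (A : Ty) {l : List Ty} (h : l ≠ []) :
    tupleTy (A :: l) = .prod A (tupleTy l) := by
  cases l with
  | nil => exact absurd rfl h
  | cons B l => rfl

@[simp] theorem patOfVars_one (x : ℕ) : patOfVars [x] = .pvar x := rfl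
theorem patOfVars_cons (x : ℕ) {l : List ℕ} (h : l ≠ []) :
    patOfVars (x :: l) = .ppair (.pvar x) (patOfVars l) := by
  cases l with
  | nil => exact absurd rfl h
  | cons a l => rfl

theorem single_disj_of_none {Γ : Ctx} {x : ℕ} (A : Ty) (h : Γ x = none) :
    Ctx.disj (Ctx.single x A) Γ := by
  intro y
  by_cases hy : y = x
  · subst hy; exact Or.inr h
  · exact Or.inl (by simp [Ctx.single, hy])

/-! ### Typing of variable tuples -/

theorem TermTy.ofVal {Γ : Ctx} {v : Val} {A : Ty} (Ψ : IsoCtx) (h : VTy Γ v A) :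
    TermTy Γ Ψ v.toTerm A := by
  induction h with
  | unit => exact TermTy.unit Ψ
  | var x A => exact TermTy.var x A Ψ
  | inl _ ih => exact TermTy.inl ih
  | inr _ ih => exact TermTy.inr ih
  | fold _ ih => exact TermTy.fold ih
  | pair _ _ hd ih1 ih2 => exact TermTy.pair ih1 ih2 hd

theorem vty_vars (L : List (ℕ × Ty)) (hnd : (L.map Prod.fst).Nodup) :
    VTy (ctxOf L) (tupleV (L.map fun p => Val.var p.1)) (tupleTy (L.map Prod.snd)) := by
  induction L with
  | nil => exact VTy.unit
  | cons p L ih =>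
    cases L with
    | nil => exact (VTy.var p.1 p.2).cast (ctxOf_single p.1 p.2).symm
    | cons q L' =>
      rw [List.map_cons] at hnd
      obtain ⟨h1, h2⟩ := List.nodup_cons.mp hnd
      exact VTy.pair (VTy.var p.1 p.2) (ih h2) (single_disj p.1 p.2 (q :: L') h1)

theorem vty_snoc (L : List (ℕ × Ty)) {Γw : Ctx} {w : Val} {C : Ty}
    (hnd : (L.map Prod.fst).Nodup) (hw : VTy Γw w C)
    (hdis : ∀ x ∈ L.map Prod.fst, Γw x = none) :
    VTy ((ctxOf L).union Γw) (tupleV ((L.map fun p => Val.var p.1) ++ [w]))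
      (tupleTy (L.map Prod.snd ++ [C])) := by
  induction L with
  | nil => exact hw.cast (Ctx.empty_union Γw).symm
  | cons p L ih =>
    rw [List.map_cons] at hnd hdis
    obtain ⟨h1, h2⟩ := List.nodup_cons.mp hnd
    simp only [List.map_cons, List.cons_append]
    rw [tupleV_cons _ (by simp), tupleTy_cons _ (by simp)]
    refine (VTy.pair (VTy.var p.1 p.2)
      (ih h2 (fun x hx => hdis x (List.mem_cons_of_mem _ hx)))
      ?_).cast ?_
    · rw [Ctx.disj_union_iff]
      exact ⟨single_disj p.1 p.2 L h1,
        single_disj_of_none _ (hdis p.1 List.mem_cons_self)⟩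
    · rw [ctxOf_cons, Ctx.union_assoc]

theorem patty_vars (L : List (ℕ × Ty)) (hne : L ≠ [])
    (hnd : (L.map Prod.fst).Nodup) :
    PatTy (patOfVars (L.map Prod.fst)) (tupleTy (L.map Prod.snd)) (ctxOf L) := by
  induction L with
  | nil => exact absurd rfl hne
  | cons p L ih =>
    cases L with
    | nil => exact (PatTy.pvar p.1 p.2).cast (ctxOf_single p.1 p.2).symm
    | cons q L' =>
      rw [List.map_cons] at hnd
      obtain ⟨h1, h2⟩ := List.nodup_cons.mp hnd
      exact PatTy.ppair (PatTy.pvar p.1 p.2) (ih (by simp) h2)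
        (single_disj p.1 p.2 (q :: L') h1)

/-! ### range'-indexed contexts of integers -/

/-- The list of pairs `(x, ZTy)` for `x ∈ range' s c`. -/
def rZ (s c : ℕ) : List (ℕ × Ty) := (List.range' s c).map (fun x => (x, ZTy))

@[simp] theorem rZ_fst (s c : ℕ) : (rZ s c).map Prod.fst = List.range' s c := by
  induction c generalizing s with
  | zero => rfl
  | succ c ih => rw [rZ, List.range'_succ, List.map_cons, List.map_cons, ← rZ, ih]

@[simp] theorem rZ_snd (s c : ℕ) : (rZ s c).map Prod.snd = List.replicate c ZTy := by
  induction c generalizing s with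
  | zero => rfl
  | succ c ih =>
    rw [rZ, List.range'_succ, List.map_cons, List.map_cons, ← rZ, ih, List.replicate_succ]

@[simp] theorem rZ_vars (s c : ℕ) :
    (rZ s c).map (fun p => Val.var p.1) = (List.range' s c).map .var := by
  induction c generalizing s with
  | zero => rfl
  | succ c ih =>
    rw [rZ, List.range'_succ, List.map_cons, List.map_cons, ← rZ, ih, List.map_cons]

theorem rZ_nodup (s c : ℕ) : ((rZ s c).map Prod.fst).Nodup := by
  rw [rZ_fst]; exact List.nodup_range'

end LinRev

namespace LinRev

/-! ### OD lemmas -/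

theorem tupleV_map_cons (x : ℕ) (xs : List ℕ) (w : Val) :
    tupleV ((x :: xs).map .var ++ [w]) = .pair (.var x) (tupleV (xs.map .var ++ [w])) := by
  rw [List.map_cons, List.cons_append, tupleV_cons _ (by simp)]

theorem tupleV_var_inj : ∀ (xs ys : List ℕ) (c d : Val), xs.length = ys.length →
    tupleV (xs.map .var ++ [c]) = tupleV (ys.map .var ++ [d]) → xs = ys ∧ c = d := by
  intro xs
  induction xs with
  | nil =>
    rintro (_ | ⟨y, ys⟩) c d hl h
    · simpa using h
    · simp at hl
  | cons x xs ih =>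
    rintro (_ | ⟨y, ys⟩) c d hl h
    · simp at hl
    · rw [tupleV_map_cons, tupleV_map_cons] at h
      simp only [Val.pair.injEq, Val.var.injEq] at h
      obtain ⟨rfl, h2⟩ := h
      obtain ⟨rfl, rfl⟩ := ih ys c d (by simpa using hl) h2
      exact ⟨rfl, rfl⟩

theorem tupleV_snoc_ne (xs : List ℕ) {c d : Val} (h : c ≠ d) :
    tupleV (xs.map .var ++ [c]) ≠ tupleV (xs.map .var ++ [d]) := by
  intro he
  exact h (tupleV_var_inj xs xs c d rfl he).2

/-- OD for a singleton set of a tuple of variables. -/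
theorem od_vars (xs : List ℕ) (A : Ty) (hne : xs ≠ []) :
    OD (tupleTy (List.replicate xs.length A)) {tupleV (xs.map .var)} := by
  induction xs with
  | nil => exact absurd rfl hne
  | cons x xs ih =>
    cases xs with
    | nil => exact OD.var A x
    | cons y ys =>
      rw [List.length_cons, List.replicate_succ, tupleTy_cons _ (by simp),
        List.map_cons, tupleV_cons _ (by simp)]
      refine OD.prodL (fun u hu => ⟨_, _, hu⟩) ?_ ?_
      · refine (OD.var A x).cast ?_
        apply Set.eq_of_subset_of_subset
        · rintro v rfl
          exact ⟨_, rfl⟩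
        · rintro v ⟨w, hw⟩
          rw [Set.mem_singleton_iff, Val.pair.injEq] at hw
          exact hw.1
      · intro v hv
        obtain ⟨w, hw⟩ := hv
        rw [Set.mem_singleton_iff, Val.pair.injEq] at hw
        obtain ⟨rfl, rfl⟩ := hw
        refine (ih (by simp)).cast ?_
        apply Set.eq_of_subset_of_subset
        · rintro w rfl
          exact rfl
        · rintro w hw
          rw [sect1, Set.mem_setOf_eq, Set.mem_singleton_iff, Val.pair.injEq] at hw
          exact hw.2

/-- OD for sets of tuples sharing a common prefix of variables. -/
theorem od_prefix (xs : List ℕ) (A C : Ty) (T : Set Val) (hT : OD C T) (hne : T.Nonempty) :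
    OD (tupleTy (List.replicate xs.length A ++ [C]))
      ((fun w => tupleV (xs.map .var ++ [w])) '' T) := by
  induction xs with
  | nil =>
    refine hT.cast ?_
    ext w; simp
  | cons x xs ih =>
    rw [List.length_cons, List.replicate_succ, List.cons_append, tupleTy_cons _ (by simp)]
    refine OD.prodL ?_ ?_ ?_
    · rintro u ⟨w, _, rfl⟩
      exact ⟨_, _, tupleV_map_cons x xs w⟩
    · refine (OD.var A x).cast ?_
      apply Set.eq_of_subset_of_subset
      · rintro v rfl
        obtain ⟨w, hw⟩ := hne
        exact ⟨tupleV (xs.map .var ++ [w]), w, hw,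
          (tupleV_map_cons x xs w).symm ▸ rfl⟩
      · rintro v ⟨w, w', hw', hv⟩
        replace hv : tupleV (List.map Val.var (x :: xs) ++ [w']) = v.pair w := hv
        rw [tupleV_map_cons, Val.pair.injEq] at hv
        exact hv.1 ▸ rfl
    · intro v hv
      obtain ⟨w0, w', hmem, hv⟩ := hv
      replace hv : tupleV (List.map Val.var (x :: xs) ++ [w']) = v.pair w0 := hv
      rw [tupleV_map_cons, Val.pair.injEq] at hv
      obtain ⟨rfl, -⟩ := hv
      refine ih.cast ?_
      apply Set.eq_of_subset_of_subset
      · rintro w ⟨a, ha, rfl⟩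
        exact ⟨a, ha, show tupleV (List.map Val.var (x :: xs) ++ [a]) = _ from
          tupleV_map_cons x xs a⟩
      · rintro w ⟨a, ha, hw⟩
        replace hw : tupleV (List.map Val.var (x :: xs) ++ [a]) = Val.pair (.var x) w := hw
        rw [tupleV_map_cons, Val.pair.injEq] at hw
        obtain ⟨-, rfl⟩ := hw
        exact ⟨a, ha, rfl⟩

end LinRev

namespace LinRev

/-- OD for sets of tuples of variables with pairwise-distinct last components. -/
theorem od_last (A C : Ty) : ∀ (n : ℕ) (L : List (List ℕ × Val)),
    (∀ p ∈ L, p.1.length = n) →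
    L.Pairwise (fun p q => p.2 ≠ q.2) →
    OD C {w | ∃ p ∈ L, p.2 = w} →
    OD (tupleTy (List.replicate n A ++ [C]))
      {v | ∃ p ∈ L, tupleV (p.1.map .var ++ [p.2]) = v} := by
  intro n
  induction n with
  | zero =>
    intro L hlen _ hC
    refine hC.cast ?_
    apply Set.eq_of_subset_of_subset
    · rintro w ⟨p, hp, rfl⟩
      refine ⟨p, hp, ?_⟩
      rw [List.length_eq_zero_iff.mp (hlen p hp)]
      rfl
    · rintro w ⟨p, hp, rfl⟩
      refine ⟨p, hp, ?_⟩
      rw [List.length_eq_zero_iff.mp (hlen p hp)]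
      rfl
  | succ n ih =>
    intro L hlen hpw hC
    have hcons : ∀ p ∈ L, ∃ x rest, p.1 = x :: rest ∧ rest.length = n := by
      intro p hp
      cases h : p.1 with
      | nil =>
        exfalso
        have := hlen p hp
        rw [h] at this
        simp at this
      | cons x rest =>
        exact ⟨x, rest, rfl, by have := hlen p hp; rw [h] at this; simpa using this⟩
    rw [List.replicate_succ, List.cons_append, tupleTy_cons _ (by simp)]
    refine OD.prodR ?_ ?_ ?_
    · rintro u ⟨p, hp, rfl⟩
      obtain ⟨x, rest, h1, -⟩ := hcons p hp
      rw [h1, tupleV_map_cons]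
      exact ⟨_, _, rfl⟩
    · refine (ih (L.map fun p => (p.1.tail, p.2)) ?_ ?_ ?_).cast ?_
      · rintro p' hp'
        rw [List.mem_map] at hp'
        obtain ⟨p, hp, rfl⟩ := hp'
        obtain ⟨x, rest, h1, h2⟩ := hcons p hp
        simp [h1, h2]
      · exact List.Pairwise.map _ (fun a b h => h) hpw
      · refine hC.cast ?_
        apply Set.eq_of_subset_of_subset
        · rintro w ⟨p, hp, rfl⟩
          exact ⟨(p.1.tail, p.2), List.mem_map_of_mem hp, rfl⟩
        · rintro w ⟨p', hp', rfl⟩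
          rw [List.mem_map] at hp'
          obtain ⟨p, hp, rfl⟩ := hp'
          exact ⟨p, hp, rfl⟩
      · apply Set.eq_of_subset_of_subset
        · rintro w ⟨p', hp', rfl⟩
          rw [List.mem_map] at hp'
          obtain ⟨p, hp, rfl⟩ := hp'
          obtain ⟨x, rest, h1, -⟩ := hcons p hp
          refine ⟨Val.var x, p, hp, ?_⟩
          rw [h1, tupleV_map_cons]
          rfl
        · rintro w ⟨u, p, hp, hu⟩
          obtain ⟨x, rest, h1, -⟩ := hcons p hp
          rw [h1, tupleV_map_cons, Val.pair.injEq] at hu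
          refine ⟨(p.1.tail, p.2), List.mem_map_of_mem hp, ?_⟩
          rw [h1]
          exact hu.2
    · rintro w ⟨u, q, hq, hu⟩
      obtain ⟨xq, restq, hq1, hq2⟩ := hcons q hq
      rw [hq1, tupleV_map_cons, Val.pair.injEq] at hu
      obtain ⟨rfl, rfl⟩ := hu
      refine (OD.var A xq).cast ?_
      apply Set.eq_of_subset_of_subset
      · rintro v rfl
        refine ⟨q, hq, ?_⟩
        rw [hq1, tupleV_map_cons]
      · rintro v ⟨p, hp, hv⟩
        obtain ⟨xp, restp, hp1, hp2⟩ := hcons p hp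
        rw [hp1, tupleV_map_cons, Val.pair.injEq] at hv
        obtain ⟨rfl, htl⟩ := hv
        obtain ⟨hrest, hsnd⟩ := tupleV_var_inj restp restq p.2 q.2 (hp2.trans hq2.symm) htl
        have hpq : p = q := by
          by_contra hne
          exact absurd hsnd
            (haveI : Std.Symm (fun p q : List ℕ × Val => p.2 ≠ q.2) := ⟨fun _ _ h => Ne.symm h⟩
             List.Pairwise.forall (R := fun p q : List ℕ × Val => p.2 ≠ q.2)
              hpw hp hq hne)
        rw [hpq, hq1] at hp1
        rw [List.cons.injEq] at hp1
        rw [hp1.1]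
        rfl

end LinRev

namespace LinRev

/-! ### Syntactic computation lemmas -/

theorem asVal_toTerm (v : Val) : v.toTerm.asVal = some v := by
  induction v with
  | unit => rfl
  | var x => rfl
  | inl v ih => simp [Val.toTerm, Term.asVal, ih]
  | inr v ih => simp [Val.toTerm, Term.asVal, ih]
  | pair v w ih1 ih2 => simp [Val.toTerm, Term.asVal, ih1, ih2]
  | fold v ih => simp [Val.toTerm, Term.asVal, ih]

theorem valOf_toTerm (v : Val) : v.toTerm.valOf = some v := by
  cases v with
  | unit => exact asVal_toTerm .unit
  | var x => exact asVal_toTerm (.var x)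
  | inl a => exact asVal_toTerm (.inl a)
  | inr a => exact asVal_toTerm (.inr a)
  | pair a b => exact asVal_toTerm (.pair a b)
  | fold a => exact asVal_toTerm (.fold a)

@[simp] theorem valOf_lett (p : Pat) (a b : Term) :
    (Term.lett p a b).valOf = b.valOf := rfl

theorem tuple_tupleTy (As : List Ty) (hne : As ≠ [])
    (h : ∀ A ∈ As, ∀ B C, A ≠ Ty.prod B C) : (tupleTy As).tuple = As := by
  induction As with
  | nil => exact absurd rfl hne
  | cons A As ih =>
    cases As with
    | nil =>
      have := h A (by simp)
      cases A <;> first | rfl | exact absurd rfl (this _ _)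
    | cons B As' =>
      rw [tupleTy_cons _ (by simp), Ty.tuple, ih (by simp)
        (fun A hA => h A (List.mem_cons_of_mem _ hA))]

theorem tuple_tupleV (xs : List ℕ) (c : Val) (h : ∀ a b, c ≠ .pair a b) :
    (tupleV (xs.map .var ++ [c])).tuple = xs.map .var ++ [c] := by
  induction xs with
  | nil =>
    cases c <;> first | rfl | exact absurd rfl (h _ _)
  | cons x xs ih =>
    rw [tupleV_map_cons, Val.tuple, ih, List.map_cons, List.cons_append]

theorem tupleVars_toTerm (xs : List ℕ) (m : ℕ) :
    (tupleV (xs.map .var ++ [.var m])).toTerm.tupleVars = some (xs ++ [m]) := by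
  induction xs with
  | nil => rfl
  | cons x xs ih =>
    rw [tupleV_map_cons]
    show Term.tupleVars (.pair (.var x) _) = _
    rw [Term.tupleVars, ih]
    rfl

/-! ### Absence of recursive calls -/

theorem norec_val (f : ℕ) (p : Term) : ∀ (v : Val), ¬ RecCallT f p v.toTerm := by
  intro v
  induction v with
  | unit => intro h; cases h
  | var x => intro h; cases h
  | inl v ih => intro h; cases h with | inl h => exact ih h
  | inr v ih => intro h; cases h with | inr h => exact ih h
  | pair v w ih1 ih2 =>
    intro h
    cases h with
    | pairL h => exact ih1 h
    | pairR h => exact ih2 h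
  | fold v ih => intro h; cases h with | fold h => exact ih h

/-- The predecessor iso: the inverse of succIso. -/
def predIso : Iso := .clauses
  (.cons (.inr (.inl (.fold (.inl .unit)))) ((Val.inl .unit).toTerm)
  (.cons (.inr (.inl (.fold (.inr (.var 0))))) ((Val.inr (.inl (.var 0))).toTerm)
  (.cons (.inl .unit) ((Val.inr (.inr (.fold (.inl .unit)))).toTerm)
  (.cons (.inr (.inr (.var 0))) ((Val.inr (.inr (.fold (.inr (.var 0))))).toTerm)
   .nil))))

theorem norec_cons_val {f : ℕ} {p : Term} {v : Val} {w : Val} {r : Clauses}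
    (h : RecCallC f p (.cons v w.toTerm r)) : RecCallC f p r := by
  cases h with
  | head h => exact absurd h (norec_val _ _ _)
  | tail h => exact h

theorem succIso_inv : succIso.inv = predIso := by
  simp [succIso, predIso, Iso.inv, Clauses.inv, invAux, Val.toTerm, Term.asVal]

theorem rec_app {f : ℕ} {p : Term} {ω : Iso} {t : Term}
    (h : RecCallT f p (.app ω t)) :
    (ω = .ivar f ∧ t = p) ∨ RecCallI f p ω ∨ RecCallT f p t := by
  cases h with
  | here => exact Or.inl ⟨rfl, rfl⟩
  | appIso h => exact Or.inr (Or.inl h)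
  | appArg h => exact Or.inr (Or.inr h)

theorem rec_lett {f : ℕ} {p : Term} {q : Pat} {t₁ t₂ : Term}
    (h : RecCallT f p (.lett q t₁ t₂)) : RecCallT f p t₁ ∨ RecCallT f p t₂ := by
  cases h with
  | lett₁ h => exact Or.inl h
  | lett₂ h => exact Or.inr h

theorem isos_ne_ivar {k : ℕ} (g : RPPx.RPP k) (m : ℕ) : isosOf g ≠ .ivar m := by
  cases g with
  | pre =>
    rw [show isosOf RPPx.RPP.pre = succIso.inv from rfl, succIso_inv]
    intro hc; cases hc
  | _ => intro hc; cases hc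

/-- No recursive call occurs in a let-body `let p = ω t in e` where `ω` is a
translated iso and `t`, `e` are value terms. -/
theorem norec_lett_isos {j : ℕ} (g : RPPx.RPP j)
    (hg : ∀ f p, ¬ RecCallI f p (isosOf g))
    {f : ℕ} {q : Pat} {tv ev : Val} {p : Term}
    (h : RecCallT f p (.lett q (.app (isosOf g) tv.toTerm) ev.toTerm)) : False := by
  rcases rec_lett h with h | h
  · rcases rec_app h with ⟨h1, -⟩ | h | h
    · exact isos_ne_ivar g f h1
    · exact hg _ _ h
    · exact norec_val _ _ _ h
  · exact norec_val _ _ _ h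

theorem norec_isos : ∀ {k : ℕ} (g : RPPx.RPP k) (f : ℕ) (p : Term),
    ¬ RecCallI f p (isosOf g) := by
  intro k g
  induction g with
  | id =>
    intro f p h
    cases h with
    | clauses h =>
      cases h with
      | head h => cases h
      | tail h => cases h
  | suc =>
    intro f p h
    cases h with
    | clauses h =>
      repeat replace h := norec_cons_val h
      cases h
  | pre =>
    intro f p h
    rw [show isosOf RPPx.RPP.pre = succIso.inv from rfl, succIso_inv] at h
    cases h with
    | clauses h =>
      repeat replace h := norec_cons_val h
      cases h
  | sign =>
    intro f p h
    cases h with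
    | clauses h =>
      repeat replace h := norec_cons_val h
      cases h
  | swap =>
    intro f p h
    cases h with
    | clauses h =>
      cases h with
      | head h => exact norec_val _ _ _ h
      | tail h => cases h
  | comp g1 g2 ih1 ih2 =>
    intro f p h
    cases h with
    | clauses h =>
      cases h with
      | tail h => cases h
      | head h =>
        rcases rec_lett h with h | h
        · rcases rec_app h with ⟨h1, -⟩ | h | h
          · exact isos_ne_ivar g1 f h1
          · exact ih1 _ _ h
          · exact norec_val _ _ _ h
        · exact norec_lett_isos g2 ih2 h
  | par g1 g2 ih1 ih2 =>
    intro f p h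
    cases h with
    | clauses h =>
      cases h with
      | tail h => cases h
      | head h =>
        rcases rec_lett h with h | h
        · rcases rec_app h with ⟨h1, -⟩ | h | h
          · exact isos_ne_ivar g1 f h1
          · exact ih1 _ _ h
          · exact norec_val _ _ _ h
        · exact norec_lett_isos g2 ih2 h
  | it g ihg =>
    rename_i k
    intro f p h
    cases h with
    | clauses h =>
      have aux : ∀ (q : Term) (pt : Pat) (tv ev : Val),
          ¬ RecCallT f q (.lett pt (.app (auxIt k (isosOf g)) tv.toTerm) ev.toTerm) := by
        intro q pt tv ev hq
        rcases rec_lett hq with hq | hq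
        · rcases rec_app hq with ⟨h1, -⟩ | hq | hq
          · cases h1
          · cases hq with
            | fixI hq hne =>
              cases hq with
              | clauses hq =>
                cases hq with
                | head hq => exact norec_lett_isos g ihg hq
                | tail hq =>
                  cases hq with
                  | tail hq => cases hq
                  | head hq =>
                    rcases rec_lett hq with hq | hq
                    · rcases rec_app hq with ⟨h1, -⟩ | hq | hq
                      · exact isos_ne_ivar g f h1
                      · exact ihg _ _ hq
                      · exact norec_val _ _ _ hq
                    · rcases rec_lett hq with hq | hq
                      · rcases rec_app hq with ⟨h1, -⟩ | hq | hq
                        · cases h1; exact hne rfl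
                        · cases hq
                        · exact norec_val _ _ _ hq
                      · exact norec_val _ _ _ hq
          · exact norec_val _ _ _ hq
        · exact norec_val _ _ _ hq
      cases h with
      | head h => exact norec_val _ _ _ h
      | tail h =>
        cases h with
        | head h => exact aux _ _ _ _ h
        | tail h =>
          cases h with
          | head h => exact aux _ _ _ _ h
          | tail h => cases h
  | ite g1 g2 g3 ih1 ih2 ih3 =>
    intro f p h
    cases h with
    | clauses h =>
      cases h with
      | head h => exact norec_lett_isos g1 ih1 h
      | tail h =>
        cases h with
        | head h => exact norec_lett_isos g2 ih2 h
        | tail h =>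
          cases h with
          | head h => exact norec_lett_isos g3 ih3 h
          | tail h => cases h

end LinRev

namespace LinRev

/-! ### Clause set computations -/

theorem setIn_cons (v : Val) (e : Term) (r : Clauses) :
    {u | ∃ t, (u, t) ∈ (Clauses.cons v e r).toList}
      = insert v {u | ∃ t, (u, t) ∈ r.toList} := by
  ext u
  constructor
  · rintro ⟨t, ht⟩
    rcases List.mem_cons.mp ht with h | h
    · rw [Prod.mk.injEq] at h
      exact Or.inl h.1
    · exact Or.inr ⟨t, h⟩
  · rintro (rfl | ⟨t, ht⟩)
    · exact ⟨e, List.mem_cons_self⟩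
    · exact ⟨t, List.mem_cons_of_mem _ ht⟩

theorem setIn_nil : {u | ∃ t, (u, t) ∈ Clauses.nil.toList} = (∅ : Set Val) := by
  ext u
  simp [Clauses.toList]

theorem setOut_cons {e : Term} {u : Val} (hu : e.valOf = some u) (v : Val) (r : Clauses) :
    {w | ∃ c ∈ (Clauses.cons v e r).toList, Term.valOf c.2 = some w}
      = insert u {w | ∃ c ∈ r.toList, Term.valOf c.2 = some w} := by
  ext w
  constructor
  · rintro ⟨c, hc, hw⟩
    rcases List.mem_cons.mp hc with h | h
    · subst h
      rw [hu, Option.some_inj] at hw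
      exact Or.inl hw.symm
    · exact Or.inr ⟨c, h, hw⟩
  · rintro (rfl | ⟨c, hc, hw⟩)
    · exact ⟨(v, e), List.mem_cons_self, hu⟩
    · exact ⟨c, List.mem_cons_of_mem _ hc, hw⟩

theorem setOut_nil : {w | ∃ c ∈ Clauses.nil.toList, Term.valOf c.2 = some w}
    = (∅ : Set Val) := by
  ext u
  simp [Clauses.toList]

/-! ### Typing of the base isos -/

theorem npos_unfold : (Ty.sum .one (.tvar 0)).unfold = .sum .one nposTy := rfl

/-- OD for the set of the two npos patterns. -/
theorem od_npos (x : ℕ) : OD nposTy {Val.fold (.inl .unit), Val.fold (.inr (.var x))} := by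
  have h1 : OD (Ty.sum .one (.tvar 0)).unfold {Val.inl .unit, Val.inr (.var x)} :=
    (OD.sum OD.unit (OD.var nposTy x)).cast (by ext v; simp [eq_comm] <;> tauto)
  exact (OD.mu h1).cast (by ext v; simp [eq_comm] <;> tauto)

theorem od_Z_in (x : ℕ) :
    OD ZTy {Val.inr (.inl (.var x)), Val.inl .unit, Val.inr (.inr (.var x))} := by
  refine (OD.sum OD.unit (OD.sum (OD.var nposTy x) (OD.var nposTy x))).cast ?_
  ext v; simp; tauto

theorem isoty_id : IsoTy none idIso (Zpow 1) (Zpow 1) := by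
  refine IsoTy.clauses (fun _ => Ctx.single 0 ZTy) ?_ ?_ ?_ ?_
  · intro c hc
    simp only [idIso, Clauses.toList, List.mem_singleton] at hc
    subst hc
    exact VTy.var 0 ZTy
  · intro c hc
    simp only [idIso, Clauses.toList, List.mem_singleton] at hc
    subst hc
    exact TermTy.var 0 ZTy none
  · rw [setIn_cons, setIn_nil]
    exact (OD.var ZTy 0).cast (by ext v; simp)
  · rw [setOut_cons (e := Term.var 0) (u := .var 0) rfl, setOut_nil]
    exact (OD.var ZTy 0).cast (by ext v; simp)

theorem isoty_swap : IsoTy none swapIso (Zpow 2) (Zpow 2) := by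
  have hd : Ctx.disj (Ctx.single 0 ZTy) (Ctx.single 1 ZTy) := by
    intro x
    by_cases h0 : x = 0
    · exact Or.inr (by simp [Ctx.single, h0])
    · exact Or.inl (by simp [Ctx.single, h0])
  have hd' : Ctx.disj (Ctx.single 1 ZTy) (Ctx.single 0 ZTy) := hd.symm
  have key : ∀ a b : ℕ, OD (Zpow 2) {Val.pair (.var a) (.var b)} := by
    intro a b
    refine OD.prodL (fun u hu => ⟨_, _, hu⟩) ?_ ?_
    · refine (OD.var ZTy a).cast ?_
      apply Set.eq_of_subset_of_subset
      · rintro v rfl; exact ⟨_, rfl⟩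
      · rintro v ⟨w, hw⟩
        rw [Set.mem_singleton_iff, Val.pair.injEq] at hw
        exact hw.1
    · intro v hv
      obtain ⟨w, hw⟩ := hv
      rw [Set.mem_singleton_iff, Val.pair.injEq] at hw
      obtain ⟨rfl, rfl⟩ := hw
      refine (OD.var ZTy b).cast ?_
      apply Set.eq_of_subset_of_subset
      · rintro w rfl; exact rfl
      · rintro w hw
        rw [sect1, Set.mem_setOf_eq, Set.mem_singleton_iff, Val.pair.injEq] at hw
        exact hw.2
  refine IsoTy.clauses (fun _ => (Ctx.single 0 ZTy).union (Ctx.single 1 ZTy)) ?_ ?_ ?_ ?_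
  · intro c hc
    simp only [swapIso, Clauses.toList, List.mem_singleton] at hc
    subst hc
    exact VTy.pair (VTy.var 0 ZTy) (VTy.var 1 ZTy) hd
  · intro c hc
    simp only [swapIso, Clauses.toList, List.mem_singleton] at hc
    subst hc
    exact (TermTy.pair (TermTy.var 1 ZTy none) (TermTy.var 0 ZTy none) hd').cast
      (Ctx.union_comm_of_disj hd')
  · rw [setIn_cons, setIn_nil]
    exact (key 0 1).cast (by ext v; simp)
  · rw [setOut_cons (u := .pair (.var 1) (.var 0)) (valOf_toTerm _), setOut_nil]
    exact (key 1 0).cast (by ext v; simp)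

theorem isoty_sign : IsoTy none signIso (Zpow 1) (Zpow 1) := by
  refine IsoTy.clauses
    (fun c => if c.1 = .inl .unit then Ctx.empty else Ctx.single 0 nposTy) ?_ ?_ ?_ ?_
  · intro c hc
    simp only [signIso, Clauses.toList, List.mem_cons, List.mem_singleton,
      List.not_mem_nil, or_false] at hc
    rcases hc with rfl | rfl | rfl
    · exact (VTy.inr (VTy.inl (VTy.var 0 nposTy))).cast
        (show Ctx.single 0 nposTy = if _ then _ else _ by rw [if_neg (by decide)])
    · exact (VTy.inr (VTy.inr (VTy.var 0 nposTy))).cast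
        (show Ctx.single 0 nposTy = if _ then _ else _ by rw [if_neg (by decide)])
    · exact (VTy.inl VTy.unit).cast
        (show Ctx.empty = if _ then _ else _ by rw [if_pos rfl])
  · intro c hc
    simp only [signIso, Clauses.toList, List.mem_cons, List.mem_singleton,
      List.not_mem_nil, or_false] at hc
    rcases hc with rfl | rfl | rfl
    · exact (TermTy.inr (TermTy.inr (TermTy.var 0 nposTy none))).cast
        (show Ctx.single 0 nposTy = if _ then _ else _ by rw [if_neg (by decide)])
    · exact (TermTy.inr (TermTy.inl (TermTy.var 0 nposTy none))).cast
        (show Ctx.single 0 nposTy = if _ then _ else _ by rw [if_neg (by decide)])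
    · exact (TermTy.inl (TermTy.unit none)).cast
        (show Ctx.empty = if _ then _ else _ by rw [if_pos rfl])
  · rw [setIn_cons, setIn_cons, setIn_cons, setIn_nil]
    exact (od_Z_in 0).cast (by ext v; simp; tauto)
  · rw [setOut_cons (u := .inr (.inr (.var 0))) (valOf_toTerm _),
      setOut_cons (u := .inr (.inl (.var 0))) (valOf_toTerm _),
      setOut_cons (u := .inl .unit) (valOf_toTerm _), setOut_nil]
    exact (od_Z_in 0).cast (by ext v; simp; tauto)

end LinRev

namespace LinRev

theorem VTy.foldN {Γ : Ctx} {v : Val} (h : VTy Γ v (.sum .one nposTy)) :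
    VTy Γ (.fold v) nposTy := @VTy.fold Γ v (.sum .one (.tvar 0)) h

theorem TermTy.foldN {Γ : Ctx} {Ψ : IsoCtx} {t : Term} (h : TermTy Γ Ψ t (.sum .one nposTy)) :
    TermTy Γ Ψ (.fold t) nposTy := @TermTy.fold Γ Ψ t (.sum .one (.tvar 0)) h

theorem od_Z_suc_in : OD ZTy {Val.inl .unit, Val.inr (.inl (.var 0)),
    Val.inr (.inr (.fold (.inl .unit))), Val.inr (.inr (.fold (.inr (.var 0))))} := by
  refine (OD.sum OD.unit (OD.sum (OD.var nposTy 0) (od_npos 0))).cast ?_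
  ext v; simp [eq_comm] <;> tauto

theorem od_Z_suc_out : OD ZTy {Val.inr (.inl (.fold (.inl .unit))),
    Val.inr (.inl (.fold (.inr (.var 0)))), Val.inl .unit, Val.inr (.inr (.var 0))} := by
  refine (OD.sum OD.unit (OD.sum (od_npos 0) (OD.var nposTy 0))).cast ?_
  ext v; simp [eq_comm] <;> tauto

theorem isoty_suc : IsoTy none succIso (Zpow 1) (Zpow 1) := by
  refine IsoTy.clauses
    (fun c => if c.1 = .inr (.inl (.var 0)) ∨ c.1 = .inr (.inr (.fold (.inr (.var 0))))
      then Ctx.single 0 nposTy else Ctx.empty) ?_ ?_ ?_ ?_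
  · intro c hc
    simp only [succIso, Clauses.toList, List.mem_cons, List.mem_singleton,
      List.not_mem_nil, or_false] at hc
    rcases hc with rfl | rfl | rfl | rfl
    · exact (VTy.inl VTy.unit).cast
        (show Ctx.empty = if _ then _ else _ by rw [if_neg (by decide)])
    · exact (VTy.inr (VTy.inl (VTy.var 0 nposTy))).cast
        (show Ctx.single 0 nposTy = if _ then _ else _ by rw [if_pos (by decide)])
    · exact (VTy.inr (VTy.inr (VTy.foldN (VTy.inl VTy.unit)))).cast
        (show Ctx.empty = if _ then _ else _ by rw [if_neg (by decide)])
    · exact (VTy.inr (VTy.inr (VTy.foldN (VTy.inr (VTy.var 0 nposTy))))).cast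
        (show Ctx.single 0 nposTy = if _ then _ else _ by rw [if_pos (by decide)])
  · intro c hc
    simp only [succIso, Clauses.toList, List.mem_cons, List.mem_singleton,
      List.not_mem_nil, or_false] at hc
    rcases hc with rfl | rfl | rfl | rfl
    · exact (TermTy.ofVal none (VTy.inr (VTy.inl (VTy.foldN (VTy.inl VTy.unit))))).cast
        (show Ctx.empty = if _ then _ else _ by rw [if_neg (by decide)])
    · exact (TermTy.ofVal none
          (VTy.inr (VTy.inl (VTy.foldN (VTy.inr (VTy.var 0 nposTy)))))).cast
        (show Ctx.single 0 nposTy = if _ then _ else _ by rw [if_pos (by decide)])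
    · exact (TermTy.ofVal none (VTy.inl VTy.unit)).cast
        (show Ctx.empty = if _ then _ else _ by rw [if_neg (by decide)])
    · exact (TermTy.ofVal none (VTy.inr (VTy.inr (VTy.var 0 nposTy)))).cast
        (show Ctx.single 0 nposTy = if _ then _ else _ by rw [if_pos (by decide)])
  · rw [setIn_cons, setIn_cons, setIn_cons, setIn_cons, setIn_nil]
    exact od_Z_suc_in.cast (by ext v; simp)
  · rw [setOut_cons (valOf_toTerm _), setOut_cons (valOf_toTerm _),
      setOut_cons (valOf_toTerm _), setOut_cons (valOf_toTerm _), setOut_nil]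
    exact od_Z_suc_out.cast (by ext v; simp)

theorem isoty_pre : IsoTy none succIso.inv (Zpow 1) (Zpow 1) := by
  rw [succIso_inv]
  refine IsoTy.clauses
    (fun c => if c.1 = .inr (.inl (.fold (.inr (.var 0)))) ∨ c.1 = .inr (.inr (.var 0))
      then Ctx.single 0 nposTy else Ctx.empty) ?_ ?_ ?_ ?_
  · intro c hc
    simp only [predIso, Clauses.toList, List.mem_cons, List.mem_singleton,
      List.not_mem_nil, or_false] at hc
    rcases hc with rfl | rfl | rfl | rfl
    · exact (VTy.inr (VTy.inl (VTy.foldN (VTy.inl VTy.unit)))).cast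
        (show Ctx.empty = if _ then _ else _ by rw [if_neg (by decide)])
    · exact (VTy.inr (VTy.inl (VTy.foldN (VTy.inr (VTy.var 0 nposTy))))).cast
        (show Ctx.single 0 nposTy = if _ then _ else _ by rw [if_pos (by decide)])
    · exact (VTy.inl VTy.unit).cast
        (show Ctx.empty = if _ then _ else _ by rw [if_neg (by decide)])
    · exact (VTy.inr (VTy.inr (VTy.var 0 nposTy))).cast
        (show Ctx.single 0 nposTy = if _ then _ else _ by rw [if_pos (by decide)])
  · intro c hc
    simp only [predIso, Clauses.toList, List.mem_cons, List.mem_singleton,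
      List.not_mem_nil, or_false] at hc
    rcases hc with rfl | rfl | rfl | rfl
    · exact (TermTy.ofVal none (VTy.inl VTy.unit)).cast
        (show Ctx.empty = if _ then _ else _ by rw [if_neg (by decide)])
    · exact (TermTy.ofVal none (VTy.inr (VTy.inl (VTy.var 0 nposTy)))).cast
        (show Ctx.single 0 nposTy = if _ then _ else _ by rw [if_pos (by decide)])
    · exact (TermTy.ofVal none
          (VTy.inr (VTy.inr (VTy.foldN (VTy.inl VTy.unit))))).cast
        (show Ctx.empty = if _ then _ else _ by rw [if_neg (by decide)])
    · exact (TermTy.ofVal none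
          (VTy.inr (VTy.inr (VTy.foldN (VTy.inr (VTy.var 0 nposTy)))))).cast
        (show Ctx.single 0 nposTy = if _ then _ else _ by rw [if_pos (by decide)])
  · rw [setIn_cons, setIn_cons, setIn_cons, setIn_cons, setIn_nil]
    exact od_Z_suc_out.cast (by ext v; simp)
  · rw [setOut_cons (valOf_toTerm _), setOut_cons (valOf_toTerm _),
      setOut_cons (valOf_toTerm _), setOut_cons (valOf_toTerm _), setOut_nil]
    exact od_Z_suc_in.cast (by ext v; simp)

end LinRev

namespace LinRev

/-! ### Typing of composition and parallel composition -/

theorem vty_range (s n : ℕ) : VTy (ctxOf (rZ s n)) (vt s n) (Zpow n) := by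
  have h := vty_vars (rZ s n) (rZ_nodup s n)
  rw [rZ_vars, rZ_snd] at h
  exact h

theorem rZ_ne_nil (s : ℕ) {n : ℕ} (hn : n ≠ 0) : rZ s n ≠ [] := by
  cases n with
  | zero => exact absurd rfl hn
  | succ n => rw [rZ, List.range'_succ]; simp

theorem patty_range (s : ℕ) {n : ℕ} (hn : n ≠ 0) :
    PatTy (pt' s n) (Zpow n) (ctxOf (rZ s n)) := by
  have h := patty_vars (rZ s n) (rZ_ne_nil s hn) (rZ_nodup s n)
  rw [rZ_fst, rZ_snd] at h
  exact h

theorem rZ_disj {s a t b : ℕ} (h : s + a ≤ t ∨ t + b ≤ s) :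
    Ctx.disj (ctxOf (rZ s a)) (ctxOf (rZ t b)) := by
  refine ctxOf_disj _ _ ?_
  intro x hx hx'
  rw [rZ_fst, List.mem_range'_1] at hx
  rw [rZ_fst, List.mem_range'_1] at hx'
  omega

theorem range'_ne_nil (s : ℕ) {n : ℕ} (hn : n ≠ 0) : List.range' s n ≠ [] := by
  cases n with
  | zero => exact absurd rfl hn
  | succ n => rw [List.range'_succ]; simp

theorem od_vars' (s : ℕ) {n : ℕ} (hn : n ≠ 0) : OD (Zpow n) {vt s n} := by
  have h := od_vars (List.range' s n) ZTy (range'_ne_nil s hn)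
  rwa [List.length_range'] at h

theorem range'_add (s a b : ℕ) :
    List.range' s (a + b) = List.range' s a ++ List.range' (s + a) b := by
  simpa [Nat.add_comm, one_mul] using (List.range'_append s a b 1).symm

theorem rZ_append (s a b : ℕ) : rZ s (a + b) = rZ s a ++ rZ (s + a) b := by
  rw [rZ, range'_add, List.map_append]; rfl

theorem isoty_comp (n : ℕ) (hn : n ≠ 0) {wf wg : Iso}
    (hf : IsoTy none wf (Zpow n) (Zpow n)) (hg : IsoTy none wg (Zpow n) (Zpow n)) :
    IsoTy none (compIso n wf wg) (Zpow n) (Zpow n) := by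
  refine IsoTy.clauses (fun _ => ctxOf (rZ 0 n)) ?_ ?_ ?_ ?_
  · intro c hc
    simp only [compIso, Clauses.toList, List.mem_singleton] at hc
    subst hc
    exact vty_range 0 n
  · intro c hc
    simp only [compIso, Clauses.toList, List.mem_singleton] at hc
    subst hc
    refine (TermTy.lett (Δ := Ctx.empty)
      (TermTy.appC hf (TermTy.ofVal none (vty_range 0 n)))
      (patty_range n hn) ?_ (Ctx.disj_empty _) (Ctx.empty_disj _)).cast (Ctx.union_empty _)
    refine TermTy.cast (Ctx.empty_union _).symm ?_
    refine (TermTy.lett (Δ := Ctx.empty)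
      (TermTy.appC hg (TermTy.ofVal none (vty_range n n)))
      (patty_range (2*n) hn) ?_ (Ctx.disj_empty _) (Ctx.empty_disj _)).cast (Ctx.union_empty _)
    exact TermTy.cast (Ctx.empty_union _).symm (TermTy.ofVal none (vty_range (2*n) n))
  · rw [setIn_cons, setIn_nil]
    exact (od_vars' 0 hn).cast (by ext v; simp [vt])
  · rw [setOut_cons (u := tupleV ((List.range' (2*n) n).map .var))
      (by rw [valOf_lett, valOf_lett]; exact valOf_toTerm _), setOut_nil]
    exact (od_vars' (2*n) hn).cast (by ext v; simp [vt])

theorem isoty_par (j l : ℕ) (hj : j ≠ 0) (hl : l ≠ 0) {wf wg : Iso}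
    (hf : IsoTy none wf (Zpow j) (Zpow j)) (hg : IsoTy none wg (Zpow l) (Zpow l)) :
    IsoTy none (parIso j l wf wg) (Zpow (j + l)) (Zpow (j + l)) := by
  have houtL : ((rZ (j+l) j ++ rZ (2*j+l) l).map Prod.fst).Nodup := by
    rw [List.map_append, rZ_fst, rZ_fst, List.nodup_append]
    refine ⟨List.nodup_range', List.nodup_range', ?_⟩
    intro x hx y hx' hxy
    subst hxy
    rw [List.mem_range'_1] at hx hx'
    omega
  have hout : VTy ((ctxOf (rZ (j+l) j)).union (ctxOf (rZ (2*j+l) l)))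
      (tupleV (((List.range' (j + l) j ++ List.range' (2*j+l) l)).map .var))
      (Zpow (j + l)) := by
    have h := vty_vars (rZ (j+l) j ++ rZ (2*j+l) l) houtL
    rw [ctxOf_append, List.map_append, List.map_append, rZ_vars, rZ_vars,
      rZ_snd, rZ_snd, ← List.map_append, ← List.replicate_add] at h
    exact h
  refine IsoTy.clauses (fun _ => ctxOf (rZ 0 (j+l))) ?_ ?_ ?_ ?_
  · intro c hc
    simp only [parIso, Clauses.toList, List.mem_singleton] at hc
    subst hc
    exact vty_range 0 (j+l)
  · intro c hc
    simp only [parIso, Clauses.toList, List.mem_singleton] at hc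
    subst hc
    refine (TermTy.lett (Γ := ctxOf (rZ 0 j)) (Δ := ctxOf (rZ j l))
      (TermTy.appC hf (TermTy.ofVal none (vty_range 0 j)))
      (patty_range (j+l) hj) ?_ (rZ_disj (by omega)) (rZ_disj (by omega))).cast
      (by rw [← ctxOf_append]
          exact congrArg ctxOf (by simpa using (rZ_append 0 j l).symm))
    refine TermTy.lett (Γ := ctxOf (rZ j l)) (Δ := ctxOf (rZ (j+l) j))
      (TermTy.appC hg (TermTy.ofVal none (vty_range j l)))
      (patty_range (2*j+l) hl) ?_ (rZ_disj (by omega)) (rZ_disj (by omega))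
    exact TermTy.ofVal none hout
  · rw [setIn_cons, setIn_nil]
    exact (od_vars' 0 (by omega)).cast (by ext v; simp [vt])
  · rw [setOut_cons (u := tupleV (((List.range' (j + l) j ++ List.range' (2*j+l) l)).map .var))
      (by rw [valOf_lett, valOf_lett]; exact valOf_toTerm _), setOut_nil]
    have h := od_vars (List.range' (j+l) j ++ List.range' (2*j+l) l) ZTy
      (by intro hc; rcases List.append_eq_nil_iff.mp hc with ⟨h1, -⟩; exact range'_ne_nil _ hj h1)
    rw [List.length_append, List.length_range', List.length_range'] at h
    exact h.cast (by ext v; simp)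

end LinRev

namespace LinRev

/-! ### Typing of the iteration auxiliary iso -/

/-- `Z^k ⊗ npos`. -/
def ZN (k : ℕ) : Ty := tupleTy (List.replicate k ZTy ++ [nposTy])

theorem ZN_tuple (k : ℕ) : (ZN k).tuple = List.replicate k ZTy ++ [nposTy] := by
  refine tuple_tupleTy _ (by simp) ?_
  intro A hA B C
  rcases List.mem_append.mp hA with h | h
  · rw [List.eq_of_mem_replicate h]
    intro hc; cases hc
  · rw [List.mem_singleton.mp h]
    intro hc; cases hc

theorem ZN_tuple_get (k : ℕ) : (ZN k).tuple[k]? = some nposTy := by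
  rw [ZN_tuple]
  have h := List.getElem?_concat_length (l := List.replicate k ZTy) (a := nposTy)
  rwa [List.length_replicate] at h

theorem single_eq_none {x y : ℕ} (A : Ty) (h : y ≠ x) : Ctx.single x A y = none := by
  simp [Ctx.single, h]

theorem vty_snocZ (s c : ℕ) {Γw : Ctx} {w : Val}
    (hw : VTy Γw w nposTy) (hdis : ∀ x ∈ List.range' s c, Γw x = none) :
    VTy ((ctxOf (rZ s c)).union Γw)
      (tupleV ((List.range' s c).map .var ++ [w])) (ZN c) := by
  have h := vty_snoc (rZ s c) (rZ_nodup s c) hw (by rw [rZ_fst]; exact hdis)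
  rw [rZ_vars, rZ_snd] at h
  exact h

/-- Typing of a tuple of variables with a final `ZTy` component, as `Z^(c+1)`. -/
theorem vty_snocZZ (s c : ℕ) {Γw : Ctx} {w : Val}
    (hw : VTy Γw w ZTy) (hdis : ∀ x ∈ List.range' s c, Γw x = none) :
    VTy ((ctxOf (rZ s c)).union Γw)
      (tupleV ((List.range' s c).map .var ++ [w])) (Zpow (c + 1)) := by
  have h := vty_snoc (rZ s c) (rZ_nodup s c) hw (by rw [rZ_fst]; exact hdis)
  rw [rZ_vars, rZ_snd] at h
  rw [Zpow, List.replicate_succ']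
  exact h

theorem patty_snocN (s c m : ℕ) (hm : ∀ x ∈ List.range' s c, x ≠ m) :
    PatTy (patOfVars (List.range' s c ++ [m])) (ZN c)
      ((ctxOf (rZ s c)).union (Ctx.single m nposTy)) := by
  have h := patty_vars (rZ s c ++ [(m, nposTy)]) (by simp)
    (by rw [List.map_append, rZ_fst]
        simp only [List.map_cons, List.map_nil]
        rw [List.nodup_append]
        exact ⟨List.nodup_range', List.nodup_singleton m,
          by intro x hx; simp only [List.mem_singleton, forall_eq]; exact hm x hx⟩)
  rw [List.map_append, List.map_append, rZ_fst, rZ_snd, ctxOf_append, ctxOf_single] at h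
  exact h

theorem disj_single_range {s c m : ℕ} (A : Ty) (hm : m < s ∨ s + c ≤ m) :
    Ctx.disj (ctxOf (rZ s c)) (Ctx.single m A) := by
  refine (single_disj m A (rZ s c) ?_).symm
  rw [rZ_fst, List.mem_range'_1]
  omega

theorem isoty_aux {k : ℕ} (hk : k ≠ 0) (g : RPPx.RPP k)
    (hf : IsoTy none (isosOf g) (Zpow k) (Zpow k)) :
    IsoTy none (auxIt k (isosOf g)) (ZN k) (ZN k) := by
  set wf := isosOf g with hwf
  refine IsoTy.fixI none ?_ ?_
  · -- typing of the clauses under iso context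
    refine IsoTy.clauses
      (fun c => if c.1 = tupleV (((List.range' 0 k).map Val.var) ++ [.fold (.inl .unit)])
        then ctxOf (rZ 0 k) else (ctxOf (rZ 0 k)).union (Ctx.single k nposTy)) ?_ ?_ ?_ ?_
    · intro c hc
      simp only [Clauses.toList, List.mem_cons, List.mem_singleton,
        List.not_mem_nil, or_false] at hc
      rcases hc with rfl | rfl
      · refine ((vty_snocZ 0 k (Γw := Ctx.empty)
          (VTy.foldN (VTy.inl VTy.unit)) (fun _ _ => rfl)).cast ?_).cast
          (show _ = if _ then _ else _ by rw [if_pos rfl])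
        exact Ctx.union_empty _
      · refine (vty_snocZ 0 k (Γw := Ctx.single k nposTy)
          (VTy.foldN (VTy.inr (VTy.var k nposTy))) ?_).cast
          (show _ = if _ then _ else _ by
            rw [if_neg (tupleV_snoc_ne _ (by simp))])
        intro x hx
        rw [List.mem_range'_1] at hx
        exact single_eq_none _ (by omega)
    · intro c hc
      simp only [Clauses.toList, List.mem_cons, List.mem_singleton,
        List.not_mem_nil, or_false] at hc
      rcases hc with rfl | rfl
      · -- first clause body
        refine TermTy.cast (show _ = if _ then _ else _ by rw [if_pos rfl]) ?_
        refine (TermTy.lett (Δ := Ctx.empty)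
          (TermTy.appC hf (TermTy.ofVal _ (vty_range 0 k)))
          (patty_range k hk) ?_ (Ctx.disj_empty _) (Ctx.empty_disj _)).cast
          (Ctx.union_empty _)
        refine TermTy.cast (Ctx.empty_union _).symm ?_
        exact TermTy.ofVal _ ((vty_snocZ k k (Γw := Ctx.empty)
          (VTy.foldN (VTy.inl VTy.unit)) (fun _ _ => rfl)).cast (Ctx.union_empty _))
      · -- second clause body
        refine TermTy.cast
          (show _ = if _ then _ else _ by rw [if_neg (tupleV_snoc_ne _ (by simp))]) ?_
        refine TermTy.lett (Γ := ctxOf (rZ 0 k)) (Δ := Ctx.single k nposTy)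
          (TermTy.appC hf (TermTy.ofVal _ (vty_range 0 k)))
          (patty_range (k+1) hk) ?_
          ((disj_single_range _ (by omega)).symm.symm) (disj_single_range _ (by omega)).symm
        -- inner let, context (single k npos).union (ctxOf (rZ (k+1) k))
        refine (TermTy.lett
          (Γ := (Ctx.single k nposTy).union (ctxOf (rZ (k+1) k))) (Δ := Ctx.empty)
          (Ξ := (ctxOf (rZ (2*k+1) k)).union (Ctx.single (3*k+1) nposTy)) (A := ZN k)
          ?_ ?_ ?_ (Ctx.disj_empty _) (Ctx.empty_disj _)).cast (Ctx.union_empty _)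
        · -- recursive application
          refine TermTy.appV (IsoTy.ivar 0 (ZN k) (ZN k)) ?_
          refine (TermTy.ofVal _ (vty_snocZ (k+1) k (Γw := Ctx.single k nposTy)
            (VTy.var k nposTy) ?_)).cast ?_
          · intro x hx
            rw [List.mem_range'_1] at hx
            exact single_eq_none _ (by omega)
          · exact Ctx.union_comm_of_disj (disj_single_range _ (by omega))
        · exact patty_snocN (2*k+1) k (3*k+1)
            (by intro x hx; rw [List.mem_range'_1] at hx; omega)
        · refine TermTy.cast (Ctx.empty_union _).symm ?_
          refine TermTy.ofVal _ (vty_snocZ (2*k+1) k (Γw := Ctx.single (3*k+1) nposTy)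
            (VTy.foldN (VTy.inr (VTy.var (3*k+1) nposTy))) ?_)
          intro x hx
          rw [List.mem_range'_1] at hx
          exact single_eq_none _ (by omega)
    · -- OD of the input set
      rw [setIn_cons, setIn_cons, setIn_nil]
      have h := od_prefix (List.range' 0 k) ZTy nposTy
        {Val.fold (.inl .unit), Val.fold (.inr (.var k))} (od_npos k) (by simp)
      rw [List.length_range'] at h
      refine h.cast ?_
      rw [Set.image_insert_eq, Set.image_singleton]
      simp
    · -- OD of the output set
      rw [setOut_cons (u := tupleV (((List.range' k k).map Val.var)
            ++ [Val.fold (.inl .unit)]))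
          (by rw [valOf_lett]; exact valOf_toTerm _),
        setOut_cons (u := tupleV (((List.range' (2*k+1) k).map Val.var)
            ++ [Val.fold (.inr (.var (3*k+1)))]))
          (by rw [valOf_lett, valOf_lett]; exact valOf_toTerm _),
        setOut_nil]
      have h := od_last ZTy nposTy k
        [(List.range' k k, Val.fold (.inl .unit)),
         (List.range' (2*k+1) k, Val.fold (.inr (.var (3*k+1))))]
        (by intro p hp
            simp only [List.mem_cons, List.mem_singleton, List.not_mem_nil, or_false] at hp
            rcases hp with rfl | rfl <;> exact List.length_range' ..)
        (by simp)
        ((od_npos (3*k+1)).cast (by ext w; simp [eq_comm]))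
      refine h.cast ?_
      ext v
      simp [eq_comm]
  · -- structural recursion criterion
    intro l hl
    injection hl with hl
    subst hl
    refine ⟨k, .sum .one (.tvar 0), ZN_tuple_get k, ?_⟩
    intro c hc
    simp only [Clauses.toList, List.mem_cons, List.mem_singleton,
      List.not_mem_nil, or_false] at hc
    rcases hc with rfl | rfl
    · refine ⟨.fold (.inl .unit), ?_, Or.inl ⟨rfl, ?_⟩⟩
      · rw [tuple_tupleV _ _ (by intro a b h; cases h)]
        have h := List.getElem?_concat_length (l := (List.range' 0 k).map Val.var)
          (a := Val.fold (.inl .unit))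
        rwa [List.length_map, List.length_range'] at h
      · intro p hp
        exact norec_lett_isos g (norec_isos g) hp
    · refine ⟨.fold (.inr (.var k)), ?_, Or.inr ?_⟩
      · rw [tuple_tupleV _ _ (by intro a b h; cases h)]
        have h := List.getElem?_concat_length (l := (List.range' 0 k).map Val.var)
          (a := Val.fold (.inr (.var k)))
        rwa [List.length_map, List.length_range'] at h
      · intro p hp
        have hp' : p = (tupleV (((List.range' (k + 1) k).map Val.var)
            ++ [Val.var k])).toTerm := by
          rcases rec_lett hp with h | h
          · rcases rec_app h with ⟨h1, -⟩ | h | h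
            · exact absurd h1 (isos_ne_ivar g 0)
            · exact absurd h (norec_isos g 0 p)
            · exact absurd h (norec_val 0 p _)
          · rcases rec_lett h with h | h
            · rcases rec_app h with ⟨-, h2⟩ | h | h
              · exact h2.symm
              · cases h
              · exact absurd h (norec_val 0 p _)
            · exact absurd h (norec_val 0 p _)
        subst hp'
        refine ⟨List.range' (k+1) k ++ [k], tupleVars_toTerm _ _, ?_, k, ?_, ?_, ?_⟩
        · rw [ZN_tuple]
          simp
        · have h := List.getElem?_concat_length (l := List.range' (k+1) k) (a := k)
          rwa [List.length_range'] at h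
        · exact Val.SubV.fold (Val.SubV.inr (Val.SubV.refl _))
        · intro hc; cases hc

end LinRev

namespace LinRev

theorem Zpow_succ (k : ℕ) : Zpow (k + 1) = tupleTy (List.replicate k ZTy ++ [ZTy]) := by
  rw [Zpow, List.replicate_succ']

theorem isoty_it {k : ℕ} (hk : k ≠ 0) (g : RPPx.RPP k)
    (hf : IsoTy none (isosOf g) (Zpow k) (Zpow k)) :
    IsoTy none (itIso k (isosOf g)) (Zpow (k + 1)) (Zpow (k + 1)) := by
  have haux := isoty_aux hk g hf
  refine IsoTy.clauses
    (fun c => if c.1 = tupleV (((List.range' 0 k).map Val.var) ++ [.inl .unit])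
      then ctxOf (rZ 0 k) else (ctxOf (rZ 0 k)).union (Ctx.single k nposTy)) ?_ ?_ ?_ ?_
  · intro c hc
    simp only [Clauses.toList, List.mem_cons, List.mem_singleton,
      List.not_mem_nil, or_false] at hc
    rcases hc with rfl | rfl | rfl
    · refine ((vty_snocZZ 0 k (Γw := Ctx.empty) (VTy.inl VTy.unit)
        (fun _ _ => rfl)).cast (Ctx.union_empty _)).cast
        (show _ = if _ then _ else _ by rw [if_pos rfl])
    · refine (vty_snocZZ 0 k (Γw := Ctx.single k nposTy)
        (VTy.inr (VTy.inl (VTy.var k nposTy))) ?_).cast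
        (show _ = if _ then _ else _ by rw [if_neg (tupleV_snoc_ne _ (by simp))])
      intro x hx
      rw [List.mem_range'_1] at hx
      exact single_eq_none _ (by omega)
    · refine (vty_snocZZ 0 k (Γw := Ctx.single k nposTy)
        (VTy.inr (VTy.inr (VTy.var k nposTy))) ?_).cast
        (show _ = if _ then _ else _ by rw [if_neg (tupleV_snoc_ne _ (by simp))])
      intro x hx
      rw [List.mem_range'_1] at hx
      exact single_eq_none _ (by omega)
  · intro c hc
    simp only [Clauses.toList, List.mem_cons, List.mem_singleton,
      List.not_mem_nil, or_false] at hc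
    have harg : VTy ((ctxOf (rZ 0 k)).union (Ctx.single k nposTy))
        (tupleV (((List.range' 0 k).map Val.var) ++ [Val.var k])) (ZN k) := by
      refine vty_snocZ 0 k (VTy.var k nposTy) ?_
      intro x hx
      rw [List.mem_range'_1] at hx
      exact single_eq_none _ (by omega)
    rcases hc with rfl | rfl | rfl
    · refine (TermTy.ofVal _ ((vty_snocZZ 0 k (Γw := Ctx.empty) (VTy.inl VTy.unit)
        (fun _ _ => rfl)).cast (Ctx.union_empty _))).cast
        (show _ = if _ then _ else _ by rw [if_pos rfl])
    · refine TermTy.cast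
        (show _ = if _ then _ else _ by rw [if_neg (tupleV_snoc_ne _ (by simp))]) ?_
      refine (TermTy.lett (Δ := Ctx.empty)
        (Ξ := (ctxOf (rZ (k+1) k)).union (Ctx.single (2*k+1) nposTy)) (A := ZN k)
        (TermTy.appC haux (TermTy.ofVal _ harg))
        (patty_snocN (k+1) k (2*k+1)
          (by intro x hx; rw [List.mem_range'_1] at hx; omega))
        ?_ (Ctx.disj_empty _) (Ctx.empty_disj _)).cast (Ctx.union_empty _)
      refine TermTy.cast (Ctx.empty_union _).symm ?_
      refine TermTy.ofVal _ (vty_snocZZ (k+1) k (Γw := Ctx.single (2*k+1) nposTy)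
        (VTy.inr (VTy.inl (VTy.var (2*k+1) nposTy))) ?_)
      intro x hx
      rw [List.mem_range'_1] at hx
      exact single_eq_none _ (by omega)
    · refine TermTy.cast
        (show _ = if _ then _ else _ by rw [if_neg (tupleV_snoc_ne _ (by simp))]) ?_
      refine (TermTy.lett (Δ := Ctx.empty)
        (Ξ := (ctxOf (rZ (k+1) k)).union (Ctx.single (2*k+1) nposTy)) (A := ZN k)
        (TermTy.appC haux (TermTy.ofVal _ harg))
        (patty_snocN (k+1) k (2*k+1)
          (by intro x hx; rw [List.mem_range'_1] at hx; omega))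
        ?_ (Ctx.disj_empty _) (Ctx.empty_disj _)).cast (Ctx.union_empty _)
      refine TermTy.cast (Ctx.empty_union _).symm ?_
      refine TermTy.ofVal _ (vty_snocZZ (k+1) k (Γw := Ctx.single (2*k+1) nposTy)
        (VTy.inr (VTy.inr (VTy.var (2*k+1) nposTy))) ?_)
      intro x hx
      rw [List.mem_range'_1] at hx
      exact single_eq_none _ (by omega)
  · rw [setIn_cons, setIn_cons, setIn_cons, setIn_nil]
    have h := od_prefix (List.range' 0 k) ZTy ZTy
      {Val.inl .unit, Val.inr (.inl (.var k)), Val.inr (.inr (.var k))}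
      ((od_Z_in k).cast (by ext v; simp; tauto)) (by simp)
    rw [List.length_range', ← List.replicate_succ'] at h
    refine h.cast ?_
    rw [Set.image_insert_eq, Set.image_insert_eq, Set.image_singleton]
    simp
  · rw [setOut_cons (u := tupleV (((List.range' 0 k).map Val.var) ++ [Val.inl .unit]))
        (valOf_toTerm _),
      setOut_cons (u := tupleV (((List.range' (k+1) k).map Val.var)
          ++ [Val.inr (.inl (.var (2*k+1)))]))
        (by rw [valOf_lett]; exact valOf_toTerm _),
      setOut_cons (u := tupleV (((List.range' (k+1) k).map Val.var)
          ++ [Val.inr (.inr (.var (2*k+1)))]))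
        (by rw [valOf_lett]; exact valOf_toTerm _),
      setOut_nil]
    have h := od_last ZTy ZTy k
      [(List.range' 0 k, Val.inl .unit),
       (List.range' (k+1) k, Val.inr (.inl (.var (2*k+1)))),
       (List.range' (k+1) k, Val.inr (.inr (.var (2*k+1))))]
      (by intro p hp
          simp only [List.mem_cons, List.mem_singleton, List.not_mem_nil, or_false] at hp
          rcases hp with rfl | rfl | rfl <;> exact List.length_range' ..)
      (by simp)
      ((od_Z_in (2*k+1)).cast (by ext w; simp [eq_comm] <;> tauto))
    rw [← List.replicate_succ'] at h
    refine h.cast ?_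
    ext v
    simp [eq_comm] <;> tauto

theorem isoty_ite {k : ℕ} (hk : k ≠ 0) {w1 w2 w3 : Iso}
    (h1 : IsoTy none w1 (Zpow k) (Zpow k)) (h2 : IsoTy none w2 (Zpow k) (Zpow k))
    (h3 : IsoTy none w3 (Zpow k) (Zpow k)) :
    IsoTy none (ifIso k w1 w2 w3) (Zpow (k + 1)) (Zpow (k + 1)) := by
  have hbody : ∀ (w : Iso), IsoTy none w (Zpow k) (Zpow k) → ∀ (u : Val),
      VTy (Ctx.single k nposTy) u ZTy →
      TermTy ((ctxOf (rZ 0 k)).union (Ctx.single k nposTy)) none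
        (.lett (pt' (k+1) k) (.app w (vt 0 k).toTerm)
          (tupleV (((List.range' (k+1) k).map Val.var) ++ [u])).toTerm)
        (Zpow (k + 1)) := by
    intro w hw u hu
    refine TermTy.lett (Γ := ctxOf (rZ 0 k)) (Δ := Ctx.single k nposTy)
      (TermTy.appC hw (TermTy.ofVal _ (vty_range 0 k)))
      (patty_range (k+1) hk) ?_
      (disj_single_range _ (by omega)) (disj_single_range _ (by omega)).symm
    refine TermTy.ofVal _ ((vty_snocZZ (k+1) k hu ?_).cast
      (Ctx.union_comm_of_disj (disj_single_range _ (by omega))))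
    intro x hx
    rw [List.mem_range'_1] at hx
    exact single_eq_none _ (by omega)
  refine IsoTy.clauses
    (fun c => if c.1 = tupleV (((List.range' 0 k).map Val.var) ++ [.inl .unit])
      then ctxOf (rZ 0 k) else (ctxOf (rZ 0 k)).union (Ctx.single k nposTy)) ?_ ?_ ?_ ?_
  · intro c hc
    simp only [Clauses.toList, List.mem_cons, List.mem_singleton,
      List.not_mem_nil, or_false] at hc
    rcases hc with rfl | rfl | rfl
    · refine (vty_snocZZ 0 k (Γw := Ctx.single k nposTy)
        (VTy.inr (VTy.inl (VTy.var k nposTy))) ?_).cast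
        (show _ = if _ then _ else _ by rw [if_neg (tupleV_snoc_ne _ (by simp))])
      intro x hx
      rw [List.mem_range'_1] at hx
      exact single_eq_none _ (by omega)
    · exact ((vty_snocZZ 0 k (Γw := Ctx.empty) (VTy.inl VTy.unit)
        (fun _ _ => rfl)).cast (Ctx.union_empty _)).cast
        (show _ = if _ then _ else _ by rw [if_pos rfl])
    · refine (vty_snocZZ 0 k (Γw := Ctx.single k nposTy)
        (VTy.inr (VTy.inr (VTy.var k nposTy))) ?_).cast
        (show _ = if _ then _ else _ by rw [if_neg (tupleV_snoc_ne _ (by simp))])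
      intro x hx
      rw [List.mem_range'_1] at hx
      exact single_eq_none _ (by omega)
  · intro c hc
    simp only [Clauses.toList, List.mem_cons, List.mem_singleton,
      List.not_mem_nil, or_false] at hc
    rcases hc with rfl | rfl | rfl
    · exact (hbody w1 h1 _ (VTy.inr (VTy.inl (VTy.var k nposTy)))).cast
        (show _ = if _ then _ else _ by rw [if_neg (tupleV_snoc_ne _ (by simp))])
    · refine TermTy.cast (show _ = if _ then _ else _ by rw [if_pos rfl]) ?_
      refine (TermTy.lett (Γ := ctxOf (rZ 0 k)) (Δ := Ctx.empty)
        (TermTy.appC h2 (TermTy.ofVal _ (vty_range 0 k)))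
        (patty_range (k+1) hk) ?_ (Ctx.disj_empty _) (Ctx.empty_disj _)).cast
        (Ctx.union_empty _)
      refine TermTy.cast (Ctx.empty_union _).symm ?_
      exact TermTy.ofVal _ ((vty_snocZZ (k+1) k (Γw := Ctx.empty) (VTy.inl VTy.unit)
        (fun _ _ => rfl)).cast (Ctx.union_empty _))
    · exact (hbody w3 h3 _ (VTy.inr (VTy.inr (VTy.var k nposTy)))).cast
        (show _ = if _ then _ else _ by rw [if_neg (tupleV_snoc_ne _ (by simp))])
  · rw [setIn_cons, setIn_cons, setIn_cons, setIn_nil]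
    have h := od_prefix (List.range' 0 k) ZTy ZTy
      {Val.inr (.inl (.var k)), Val.inl .unit, Val.inr (.inr (.var k))}
      (od_Z_in k) (by simp)
    rw [List.length_range', ← List.replicate_succ'] at h
    refine h.cast ?_
    rw [Set.image_insert_eq, Set.image_insert_eq, Set.image_singleton]
    simp
  · rw [setOut_cons (u := tupleV (((List.range' (k+1) k).map Val.var)
          ++ [Val.inr (.inl (.var k))]))
        (by rw [valOf_lett]; exact valOf_toTerm _),
      setOut_cons (u := tupleV (((List.range' (k+1) k).map Val.var) ++ [Val.inl .unit]))
        (by rw [valOf_lett]; exact valOf_toTerm _),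
      setOut_cons (u := tupleV (((List.range' (k+1) k).map Val.var)
          ++ [Val.inr (.inr (.var k))]))
        (by rw [valOf_lett]; exact valOf_toTerm _),
      setOut_nil]
    have h := od_last ZTy ZTy k
      [(List.range' (k+1) k, Val.inr (.inl (.var k))),
       (List.range' (k+1) k, Val.inl .unit),
       (List.range' (k+1) k, Val.inr (.inr (.var k)))]
      (by intro p hp
          simp only [List.mem_cons, List.mem_singleton, List.not_mem_nil, or_false] at hp
          rcases hp with rfl | rfl | rfl <;> exact List.length_range' ..)
      (by simp)
      ((od_Z_in k).cast (by ext w; simp [eq_comm] <;> tauto))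
    rw [← List.replicate_succ'] at h
    refine h.cast ?_
    ext v
    simp [eq_comm] <;> tauto

theorem rpp_pos : ∀ {k : ℕ}, RPPx.RPP k → k ≠ 0 := by
  intro k f
  induction f <;> omega

end LinRev

open LinRev in
/-- The RPP-to-iso encoding is well-typed: for every
`f ∈ RPP^k`, the translated iso `isos(f)` has type `Z^k ↔ Z^k`. -/
theorem rpp_encoding_well_typed (k : ℕ) (f : RPPx.RPP k) :
    IsoTy none (isosOf f) (Zpow k) (Zpow k) := by
  induction f with
  | id => exact isoty_id
  | suc => exact isoty_suc
  | pre => exact isoty_pre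
  | sign => exact isoty_sign
  | swap => exact isoty_swap
  | comp f g ihf ihg => exact isoty_comp _ (rpp_pos f) ihf ihg
  | par f g ihf ihg => exact isoty_par _ _ (rpp_pos f) (rpp_pos g) ihf ihg
  | it f ihf => exact isoty_it (rpp_pos f) f ihf
  | ite f g h ihf ihg ihh => exact isoty_ite (rpp_pos f) ihf ihg ihh
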